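/- arXiv:math/0403364 — 4 statements merged into one kernel-verified Lean document; each statement's English description precedes it below -/
import Mathlib

section
/- Let g and f_1, ..., f_n be real-rooted standard polynomials in ℝ[x]. (i) If for each 1 ≤ i ≤ n we have either g ≪ f_i or g ⪯ f_i, then the sum F = f_1 + f_2 + ... + f_n is real-rooted and satisfies g ⪯ F or g ≪ F (according to the degree of F). (ii) If for each 1 ≤ i ≤ n we have either f_i ≪ g or f_i ⪯ g, then the sum F = f_1 + ... + f_n is real-rooted and satisfies F ⪯ g or F ≪ g (according to the degree of F). -/
open Polynomial

/-- All complex zeros of `f` are real (holds trivially for `f = 0`). -/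
def AllRootsReal (f : Polynomial ℝ) : Prop := f.roots.card = f.natDegree

/-- `f` is real-rooted: nonzero and all of its complex zeros are real. -/
def RealRooted (f : Polynomial ℝ) : Prop := f ≠ 0 ∧ AllRootsReal f

/-- The `i`-th smallest real zero of `f` (counted with multiplicity). -/
noncomputable def nthRoot (f : Polynomial ℝ) (i : ℕ) : ℝ :=
  (f.roots.sort (· ≤ ·)).getD i 0

/-- `f` interlaces `g` : both are real-rooted, `g` has one more zero than `f`,
and `β₁ ≤ α₁ ≤ β₂ ≤ ⋯ ≤ β_{j-1} ≤ α_{j-1} ≤ β_j`. -/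
def Interlaces (f g : Polynomial ℝ) : Prop :=
  RealRooted f ∧ RealRooted g ∧ g.roots.card = f.roots.card + 1 ∧
  ∀ i < f.roots.card, nthRoot g i ≤ nthRoot f i ∧ nthRoot f i ≤ nthRoot g (i + 1)

/-- `f` alternates left of `g` : both are real-rooted, with equally many zeros,
and `α₁ ≤ β₁ ≤ α₂ ≤ ⋯ ≤ α_i ≤ β_i`. -/
def AlternatesLeft (f g : Polynomial ℝ) : Prop :=
  RealRooted f ∧ RealRooted g ∧ g.roots.card = f.roots.card ∧
  (∀ i < f.roots.card, nthRoot f i ≤ nthRoot g i) ∧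
  (∀ i, i + 1 < f.roots.card → nthRoot g i ≤ nthRoot f (i + 1))

/-- `f` and `g` have no common (real) zero. -/
def NoCommonZero (f g : Polynomial ℝ) : Prop := ∀ x : ℝ, ¬(f.eval x = 0 ∧ g.eval x = 0)

def StrictInterlaces (f g : Polynomial ℝ) : Prop := Interlaces f g ∧ NoCommonZero f g

def StrictAlternatesLeft (f g : Polynomial ℝ) : Prop := AlternatesLeft f g ∧ NoCommonZero f g


section Aux
open Filter

lemma sorted_getD_mono {L : List ℝ} (hL : L.Pairwise (· ≤ ·)) {i j : ℕ} (hij : i ≤ j)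
    (hj : j < L.length) : L.getD i 0 ≤ L.getD j 0 := by
  rcases eq_or_lt_of_le hij with rfl | hlt
  · exact le_refl _
  · rw [List.getD_eq_getElem L 0 (lt_trans hlt hj), List.getD_eq_getElem L 0 hj]
    exact List.pairwise_iff_getElem.mp hL i j (lt_trans hlt hj) hj hlt

lemma nthRoot_mono (f : Polynomial ℝ) {i j : ℕ} (hij : i ≤ j) (hj : j < f.roots.card) :
    nthRoot f i ≤ nthRoot f j := by
  have := Multiset.length_sort (α := ℝ) (r := (· ≤ ·)) (s := f.roots)
  exact sorted_getD_mono (f.roots.pairwise_sort _) hij (by rw [this]; exact hj)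

lemma nthRoot_mem (f : Polynomial ℝ) {k : ℕ} (hk : k < f.roots.card) :
    nthRoot f k ∈ f.roots := by
  have hlen : k < (f.roots.sort (· ≤ ·)).length := by
    rw [Multiset.length_sort]; exact hk
  rw [nthRoot, List.getD_eq_getElem _ 0 hlen]
  have := List.getElem_mem hlen
  rwa [← Multiset.mem_sort (· ≤ ·)]

lemma nthRoot_isRoot (f : Polynomial ℝ) (hf : f ≠ 0) {k : ℕ} (hk : k < f.roots.card) :
    f.eval (nthRoot f k) = 0 := by
  have := nthRoot_mem f hk
  exact (mem_roots hf).mp this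

-- insertion index lemma at list level
lemma orderedInsert_index (β : ℝ) : ∀ (L' : List ℝ), L'.Pairwise (· ≤ ·) →
    ∃ p ≤ L'.length, (∀ j < p, L'.getD j 0 < β) ∧ (p < L'.length → β ≤ L'.getD p 0) ∧
      (∀ j, (L'.orderedInsert (· ≤ ·) β).getD j 0 =
        if j < p then L'.getD j 0 else if j = p then β else L'.getD (j-1) 0) := by
  intro L'
  induction L' with
  | nil =>
    intro _
    refine ⟨0, le_refl _, by omega, by simp, ?_⟩
    intro j
    rcases Nat.eq_zero_or_pos j with rfl | hj
    · simp [List.orderedInsert]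
    · simp only [List.orderedInsert]
      rw [if_neg (by omega), if_neg (by omega)]
      rw [List.getD_eq_default, List.getD_eq_default] <;> simp <;> omega
  | cons a l ih =>
    intro hs
    have hsl : l.Pairwise (· ≤ ·) := hs.of_cons
    by_cases hba : β ≤ a
    · refine ⟨0, by simp, by omega, by simpa, ?_⟩
      intro j
      have : (a :: l).orderedInsert (· ≤ ·) β = β :: a :: l := by
        simp [List.orderedInsert, hba]
      rw [this]
      rcases Nat.eq_zero_or_pos j with rfl | hj
      · simp
      · rw [if_neg (by omega), if_neg (by omega)]
        obtain ⟨j', rfl⟩ := Nat.exists_eq_add_of_le hj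
        rw [Nat.add_comm, List.getD_cons_succ]
        have h : j' + Nat.succ 0 - 1 = j' := by omega
        rw [h]
    · obtain ⟨p, hp, h1, h2, h3⟩ := ih hsl
      refine ⟨p + 1, by simpa using hp, ?_, ?_, ?_⟩
      · intro j hj
        rcases Nat.eq_zero_or_pos j with rfl | hj0
        · simpa using lt_of_not_ge hba
        · obtain ⟨j', rfl⟩ := Nat.exists_eq_add_of_le hj0
          simp only [Nat.add_comm 1 j', List.getD_cons_succ]
          exact h1 j' (by omega)
      · intro hplen
        simp only [List.length_cons] at hplen
        simpa using h2 (by omega)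
      · intro j
        have : (a :: l).orderedInsert (· ≤ ·) β = a :: l.orderedInsert (· ≤ ·) β := by
          simp [List.orderedInsert, hba]
        rw [this]
        rcases Nat.eq_zero_or_pos j with rfl | hj0
        · simp
        · obtain ⟨j', rfl⟩ := Nat.exists_eq_add_of_le hj0
          simp only [Nat.add_comm 1 j', List.getD_cons_succ]
          rw [h3 j']
          by_cases c1 : j' < p
          · rw [if_pos c1, if_pos (by omega)]
          · rw [if_neg c1]
            by_cases c2 : j' = p
            · rw [if_pos c2, if_neg (by omega), if_pos (by omega)]
            · rw [if_neg c2, if_neg (by omega), if_neg (by omega)]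
              have : j' + 1 - 1 = (j' - 1) + 1 := by omega
              rw [this, List.getD_cons_succ]

lemma sort_cons_eq (β : ℝ) (s : Multiset ℝ) :
    (β ::ₘ s).sort (· ≤ ·) = (s.sort (· ≤ ·)).orderedInsert (· ≤ ·) β := by
  apply List.Perm.eq_of_pairwise' (Multiset.pairwise_sort _ _)
    ((Multiset.pairwise_sort s (· ≤ ·)).orderedInsert β _) ?_
  have h1 : ((β ::ₘ s).sort (· ≤ ·) : Multiset ℝ) = (β ::ₘ s) := Multiset.sort_eq _ _
  have h2 : ((s.sort (· ≤ ·)) : Multiset ℝ) = s := Multiset.sort_eq _ _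
  have : List.Perm ((s.sort (· ≤ ·)).orderedInsert (· ≤ ·) β) (β :: s.sort (· ≤ ·)) :=
    List.perm_orderedInsert _ _ _
  refine (Multiset.coe_eq_coe.mp ?_).trans this.symm
  rw [h1]
  have : (↑(β :: s.sort (· ≤ ·)) : Multiset ℝ) = β ::ₘ ↑(s.sort (· ≤ ·)) := rfl
  rw [this, h2]

lemma nthRoot_cons {g g₁ : Polynomial ℝ} {β : ℝ} (h : g.roots = β ::ₘ g₁.roots) :
    ∃ p ≤ g₁.roots.card, (∀ j < p, nthRoot g₁ j < β) ∧
      (p < g₁.roots.card → β ≤ nthRoot g₁ p) ∧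
      ∀ j, nthRoot g j = if j < p then nthRoot g₁ j else if j = p then β
            else nthRoot g₁ (j-1) := by
  obtain ⟨p, hp, h1, h2, h3⟩ := orderedInsert_index β (g₁.roots.sort (· ≤ ·))
    (Multiset.pairwise_sort _ _)
  rw [Multiset.length_sort] at hp h2
  refine ⟨p, hp, h1, h2, ?_⟩
  intro j
  show (g.roots.sort (· ≤ ·)).getD j 0 = _
  rw [h, sort_cons_eq]
  exact h3 j

lemma neg_pow_prod (l : List ℝ) (h : ∀ x ∈ l, x ≤ 0) : 0 ≤ (-1)^l.length * l.prod := by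
  induction l with
  | nil => norm_num
  | cons a l ih =>
    have ha : a ≤ 0 := h a (by simp)
    have ihl := ih (fun x hx => h x (by simp [hx]))
    have : (-1:ℝ)^(a :: l).length * (a :: l).prod = (-a) * ((-1)^l.length * l.prod) := by
      simp [List.prod_cons, pow_succ]; ring
    rw [this]
    exact mul_nonneg (by linarith) ihl

lemma eval_eq_prod (f : Polynomial ℝ) (hf : AllRootsReal f) (β : ℝ) :
    f.eval β = f.leadingCoeff * ((f.roots.sort (· ≤ ·)).map (fun a => β - a)).prod := by
  conv_lhs => rw [← C_leadingCoeff_mul_prod_multiset_X_sub_C hf]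
  rw [eval_mul, eval_C, eval_multiset_prod, Multiset.map_map]
  have h1 : (f.roots.map (fun a => eval β (X - C a))) = f.roots.map (fun a => β - a) := by
    apply Multiset.map_congr rfl
    intro a _
    simp
  rw [Function.comp_def] at *
  rw [h1]
  congr 1
  conv_lhs => rw [← Multiset.sort_eq f.roots (· ≤ ·)]
  rw [Multiset.map_coe, Multiset.prod_coe]

lemma sign_eval (f : Polynomial ℝ) (hf : RealRooted f) (hlc : 0 < f.leadingCoeff)
    (β : ℝ) (s : ℕ) (hs : s ≤ f.roots.card)
    (hlow : ∀ j < s, nthRoot f j ≤ β)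
    (hhigh : ∀ j, s ≤ j → j < f.roots.card → β ≤ nthRoot f j) :
    0 ≤ (-1)^(f.roots.card - s) * f.eval β := by
  set L := f.roots.sort (· ≤ ·) with hL
  have hlen : L.length = f.roots.card := Multiset.length_sort _
  have hnth : ∀ j, nthRoot f j = L.getD j 0 := fun j => rfl
  rw [eval_eq_prod f hf.2 β]
  have hsplit : L.map (fun a => β - a) =
      (L.take s).map (fun a => β - a) ++ (L.drop s).map (fun a => β - a) := by
    rw [← List.map_append, List.take_append_drop]
  have hp1 : 0 ≤ ((L.take s).map (fun a => β - a)).prod := by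
    apply List.prod_nonneg
    intro x hx
    obtain ⟨a, ha, rfl⟩ := List.mem_map.mp hx
    obtain ⟨i, hi, rfl⟩ := List.mem_iff_getElem.mp ha
    have hi' : i < s := by
      have : (L.take s).length = min s L.length := List.length_take
      omega
    have hiL : i < L.length := by
      have : (L.take s).length = min s L.length := List.length_take
      omega
    rw [List.getElem_take]
    have : L[i] = nthRoot f i := by rw [hnth, List.getD_eq_getElem _ _ hiL]
    rw [this]
    have := hlow i hi'
    linarith
  have hp2 : 0 ≤ (-1)^(f.roots.card - s) * ((L.drop s).map (fun a => β - a)).prod := by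
    have hlen2 : ((L.drop s).map (fun a => β - a)).length = f.roots.card - s := by
      rw [List.length_map, List.length_drop, hlen]
    rw [← hlen2]
    apply neg_pow_prod
    intro x hx
    obtain ⟨a, ha, rfl⟩ := List.mem_map.mp hx
    obtain ⟨i, hi, rfl⟩ := List.mem_iff_getElem.mp ha
    rw [List.getElem_drop]
    have hiL : s + i < L.length := by
      have : (L.drop s).length = L.length - s := List.length_drop
      omega
    have : L[s+i] = nthRoot f (s+i) := by rw [hnth, List.getD_eq_getElem _ _ hiL]
    rw [this]
    have := hhigh (s+i) (by omega) (by omega)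
    linarith
  rw [hsplit, List.prod_append]
  calc (0:ℝ) ≤ (f.leadingCoeff * ((L.take s).map (fun a => β - a)).prod) *
        ((-1)^(f.roots.card - s) * ((L.drop s).map (fun a => β - a)).prod) :=
        mul_nonneg (mul_nonneg (le_of_lt hlc) hp1) hp2
    _ = (-1)^(f.roots.card - s) * (f.leadingCoeff *
        (((L.take s).map (fun a => β - a)).prod * ((L.drop s).map (fun a => β - a)).prod)) := by
        ring

lemma exists_root_gt (F : Polynomial ℝ) (hlc : 0 < F.leadingCoeff) (u : ℝ)
    (hu : F.eval u < 0) : ∃ x, u < x ∧ F.eval x = 0 := by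
  have hdeg : 0 < F.degree := by
    rcases le_or_gt F.degree 0 with h | h
    · exfalso
      have : F = C (F.coeff 0) := eq_C_of_degree_le_zero h
      rw [this, eval_C] at hu
      have : F.leadingCoeff = F.coeff 0 := by rw [this]; simp
      rw [this] at hlc; linarith
    · exact h
  have htend : Tendsto (fun x => F.eval x) atTop atTop :=
    F.tendsto_atTop_of_leadingCoeff_nonneg hdeg (le_of_lt hlc)
  obtain ⟨v, hv⟩ := ((htend.eventually_gt_atTop 0).and (eventually_gt_atTop u)).exists
  have hcont : ContinuousOn (fun x => F.eval x) (Set.Icc u v) :=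
    (Polynomial.continuous F).continuousOn
  have : (0:ℝ) ∈ Set.Ioo (F.eval u) (F.eval v) := ⟨hu, hv.1⟩
  obtain ⟨x, hx, hx0⟩ := intermediate_value_Ioo (le_of_lt hv.2) hcont this
  exact ⟨x, hx.1, hx0⟩

lemma exists_root_lt (F : Polynomial ℝ) (hlc : 0 < F.leadingCoeff) (u : ℝ)
    (hu : (-1)^F.natDegree * F.eval u < 0) : ∃ x, x < u ∧ F.eval x = 0 := by
  have hX : (-X : Polynomial ℝ).natDegree = 1 := by simp
  set G := C ((-1:ℝ)^F.natDegree) * F.comp (-X) with hG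
  have hevalG : ∀ x, G.eval x = (-1)^F.natDegree * F.eval (-x) := by
    intro x; rw [hG]; simp [eval_comp]
  have hlcG : G.leadingCoeff = F.leadingCoeff := by
    rw [hG, leadingCoeff_mul, leadingCoeff_C, leadingCoeff_comp (by rw [hX]; omega)]
    have : (-X : Polynomial ℝ).leadingCoeff = -1 := by simp
    rw [this]
    rw [mul_comm, mul_assoc, ← mul_pow]
    norm_num
  obtain ⟨x, hx1, hx2⟩ := exists_root_gt G (by rw [hlcG]; exact hlc) (-u)
    (by rw [hevalG]; simpa using hu)
  refine ⟨-x, by linarith, ?_⟩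
  rw [hevalG x] at hx2
  rcases mul_eq_zero.mp hx2 with h | h
  · exfalso
    have : ((-1:ℝ)) ^ F.natDegree ≠ 0 := by
      apply pow_ne_zero; norm_num
    exact this h
  · exact h

lemma root_between (F : Polynomial ℝ) (u v : ℝ) (huv : u < v)
    (h : F.eval u * F.eval v < 0) : ∃ x, u < x ∧ x < v ∧ F.eval x = 0 := by
  have hcont : ContinuousOn (fun x => F.eval x) (Set.Icc u v) :=
    (Polynomial.continuous F).continuousOn
  rcases lt_or_ge (F.eval u) 0 with hu | hu
  · have hv : 0 < F.eval v := by nlinarith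
    obtain ⟨x, hx, hx0⟩ := intermediate_value_Ioo (le_of_lt huv) hcont ⟨hu, hv⟩
    exact ⟨x, hx.1, hx.2, hx0⟩
  · have hu' : 0 < F.eval u := by
      rcases eq_or_lt_of_le hu with h0 | h0
      · exfalso; rw [← h0] at h; simp at h
      · exact h0
    have hv : F.eval v < 0 := by nlinarith
    obtain ⟨x, hx, hx0⟩ := intermediate_value_Ioo' (le_of_lt huv) hcont ⟨hv, hu'⟩
    exact ⟨x, hx.1, hx.2, hx0⟩

lemma realRooted_of_roots (F : Polynomial ℝ) (hF : F ≠ 0) (y : ℕ → ℝ)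
    (hmono : ∀ i j, i < j → j < F.natDegree → y i < y j)
    (hroot : ∀ k < F.natDegree, F.eval (y k) = 0) :
    RealRooted F ∧ F.roots.card = F.natDegree ∧ ∀ k < F.natDegree, nthRoot F k = y k := by
  set d := F.natDegree with hd
  set ly : List ℝ := (List.range d).map y with hly
  have hlylen : ly.length = d := by simp [hly]
  have hlyget : ∀ i (h : i < d), ly[i]'(by omega) = y i := by
    intro i h
    simp [hly]
  have hsorted : ly.Pairwise (· ≤ ·) := by
    rw [List.pairwise_iff_getElem]
    intro i j hi hj hij
    rw [hlylen] at hi hj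
    rw [hlyget i hi, hlyget j hj]
    exact le_of_lt (hmono i j hij hj)
  have hnodup : ly.Nodup := by
    rw [List.nodup_iff_getElem?_ne_getElem?]
    intro i j hij hj
    rw [hlylen] at hj
    rw [List.getElem?_eq_getElem (by omega), List.getElem?_eq_getElem (by omega),
      hlyget i (by omega), hlyget j hj]
    exact fun h => absurd (Option.some_injective _ h) (ne_of_lt (hmono i j hij hj))
  have hle : (↑ly : Multiset ℝ) ≤ F.roots := by
    rw [Multiset.le_iff_count]
    intro a
    by_cases ha : a ∈ ly
    · have h1 : Multiset.count a ↑ly = 1 := by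
        rw [Multiset.coe_count]
        exact List.count_eq_one_of_mem hnodup ha
      rw [h1]
      rw [Multiset.one_le_count_iff_mem, mem_roots hF]
      obtain ⟨i, hi, rfl⟩ := List.mem_iff_getElem.mp ha
      rw [hlylen] at hi
      rw [hlyget i hi]
      exact hroot i hi
    · rw [Multiset.coe_count, List.count_eq_zero_of_not_mem ha]
      omega
  have hcardle : F.roots.card ≤ d := F.card_roots' 
  have hcard : Multiset.card (↑ly : Multiset ℝ) = d := by
    rw [Multiset.coe_card, hlylen]
  have heq : F.roots = ↑ly := by
    symm
    apply Multiset.eq_of_le_of_card_le hle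
    omega
  have hsort : F.roots.sort (· ≤ ·) = ly := by
    apply List.Perm.eq_of_pairwise' (Multiset.pairwise_sort _ _) hsorted
    apply Multiset.coe_eq_coe.mp
    rw [Multiset.sort_eq, heq]
  refine ⟨⟨hF, ?_⟩, ?_, ?_⟩
  · rw [AllRootsReal, heq, hcard]
  · rw [heq, hcard]
  · intro k hk
    rw [nthRoot, hsort, List.getD_eq_getElem _ _ (by omega), hlyget k hk]

lemma rel_unpack {β : ℝ} {N p : ℕ} {u u' : ℕ → ℝ} (hp : p ≤ N)
    (hrel : ∀ j < N + 1, u j = if j < p then u' j else if j = p then β else u' (j-1)) :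
    (∀ j < p, u j = u' j) ∧ u p = β ∧ (∀ j, p ≤ j → j < N → u' j = u (j+1)) := by
  refine ⟨fun j hj => by rw [hrel j (by omega), if_pos hj], ?_, ?_⟩
  · rw [hrel p (by omega), if_neg (by omega), if_pos rfl]
  · intro j h1 h2
    rw [hrel (j+1) (by omega), if_neg (by omega), if_neg (by omega)]
    simp

section Transfer
variable {β : ℝ} {M p q : ℕ} {u u' v v' : ℕ → ℝ}

lemma up_inter (hpM : p ≤ M) (hqM : q ≤ M + 1)
    (hu : ∀ j < M + 1, u j = if j < p then u' j else if j = p then β else u' (j-1))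
    (hult : ∀ j < p, u' j < β) (huge : p < M → β ≤ u' p)
    (hv : ∀ j < M + 2, v j = if j < q then v' j else if j = q then β else v' (j-1))
    (hvlt : ∀ j < q, v' j < β) (hvge : q < M + 1 → β ≤ v' q)
    (hint : ∀ j < M, v' j ≤ u' j ∧ u' j ≤ v' (j+1)) :
    ∀ j < M + 1, v j ≤ u j ∧ u j ≤ v (j+1) := by
  obtain ⟨hu1, hu2, hu3⟩ := rel_unpack hpM hu
  obtain ⟨hv1, hv2, hv3⟩ := rel_unpack hqM hv
  have hq2 : q = p ∨ q = p + 1 := by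
    rcases Nat.lt_or_ge q p with h | h
    · exfalso
      have h2 := hvge (by omega)
      have h3 := (hint q (by omega)).1
      have h4 := hult q h
      linarith
    · rcases Nat.lt_or_ge (p+1) q with h' | h'
      · exfalso
        have h1 := hvlt (p+1) h'
        have h2 := huge (by omega)
        have h3 := (hint p (by omega)).2
        linarith
      · omega
  intro j hj
  constructor
  · -- v j ≤ u j
    rcases Nat.lt_trichotomy j p with h | h | h
    · have e1 := hv1 j (by omega)
      have e2 := hu1 j h
      have e3 := (hint j (by omega)).1
      linarith
    · -- j = p : depends on q
      rcases hq2 with h2 | h2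
      · have e1 : v j = β := by rw [h, ← h2] at *; exact hv2
        have e2 : u j = β := by rw [h]; exact hu2
        linarith
      · have e1 : v j = v' j := hv1 j (by omega)
        have e2 : u j = β := by rw [h]; exact hu2
        have e3 : v' j < β := hvlt j (by omega)
        linarith
    · obtain ⟨k, rfl⟩ : ∃ k, j = k + 1 := ⟨j-1, by omega⟩
      rcases hq2 with h2 | h2
      · have e1 : v' k = v (k+1) := hv3 k (by omega) (by omega)
        have e2 : u' k = u (k+1) := hu3 k (by omega) (by omega)
        have e3 := (hint k (by omega)).1
        linarith
      · rcases Nat.lt_trichotomy (k+1) q with h3 | h3 | h3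
        · -- k+1 < q = p+1 impossible since k+1 > p
          omega
        · have e1 : v (k+1) = β := by rw [h3]; exact hv2
          have e2 : u' p = u (p+1) := hu3 p (by omega) (by omega)
          have e3 : β ≤ u' p := huge (by omega)
          have e4 : p + 1 = k + 1 := by omega
          rw [e4] at e2
          linarith
        · have e1 : v' k = v (k+1) := hv3 k (by omega) (by omega)
          have e2 : u' k = u (k+1) := hu3 k (by omega) (by omega)
          have e3 := (hint k (by omega)).1
          linarith
  · -- u j ≤ v (j+1)
    rcases Nat.lt_trichotomy j p with h | h | h
    · rcases Nat.lt_or_ge (j+1) q with h3 | h3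
      · have e1 : v (j+1) = v' (j+1) := hv1 (j+1) h3
        have e2 : u j = u' j := hu1 j h
        have e3 := (hint j (by omega)).2
        linarith
      · -- j+1 = q (since j < p ≤ q means j+1 ≤ q)
        have h4 : j + 1 = q := by omega
        have e1 : v (j+1) = β := by rw [h4]; exact hv2
        have e2 : u j = u' j := hu1 j h
        have e3 : u' j < β := hult j h
        linarith
    · have e2 : u j = β := by rw [h]; exact hu2
      rcases hq2 with h2 | h2
      · have e1 : v' q = v (q+1) := hv3 q (by omega) (by omega)
        have e3 : β ≤ v' q := hvge (by omega)
        have e4 : q + 1 = j + 1 := by omega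
        rw [e4] at e1
        linarith
      · have e1 : v (j+1) = β := by rw [show j+1 = q by omega]; exact hv2
        linarith
    · obtain ⟨k, rfl⟩ : ∃ k, j = k + 1 := ⟨j-1, by omega⟩
      have e1 : v' (k+1) = v (k+2) := hv3 (k+1) (by omega) (by omega)
      have e2 : u' k = u (k+1) := hu3 k (by omega) (by omega)
      have e3 := (hint k (by omega)).2
      linarith

lemma down_inter (hpM : p ≤ M) (hqM : q ≤ M + 1)
    (hu : ∀ j < M + 1, u j = if j < p then u' j else if j = p then β else u' (j-1))
    (hult : ∀ j < p, u' j < β) (huge : p < M → β ≤ u' p)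
    (hv : ∀ j < M + 2, v j = if j < q then v' j else if j = q then β else v' (j-1))
    (hvlt : ∀ j < q, v' j < β) (hvge : q < M + 1 → β ≤ v' q)
    (hint : ∀ j < M + 1, v j ≤ u j ∧ u j ≤ v (j+1)) :
    ∀ j < M, v' j ≤ u' j ∧ u' j ≤ v' (j+1) := by
  obtain ⟨hu1, hu2, hu3⟩ := rel_unpack hpM hu
  obtain ⟨hv1, hv2, hv3⟩ := rel_unpack hqM hv
  have hq2 : q = p ∨ q = p + 1 := by
    rcases Nat.lt_or_ge q p with h | h
    · exfalso
      have h1 := (hint q (by omega)).1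
      have e1 : u q = u' q := hu1 q h
      have e2 := hult q h
      linarith [hv2]
    · rcases Nat.lt_or_ge (p+1) q with h' | h'
      · exfalso
        have h1 := (hint p (by omega)).2
        have e1 : v (p+1) = v' (p+1) := hv1 (p+1) h'
        have e2 := hvlt (p+1) h'
        linarith [hu2]
      · omega
  intro j hj
  constructor
  · -- v' j ≤ u' j
    rcases Nat.lt_trichotomy j p with h | h | h
    · rcases Nat.lt_or_ge j q with h3 | h3
      · have e1 : v j = v' j := hv1 j h3
        have e2 : u j = u' j := hu1 j h
        have e3 := (hint j (by omega)).1
        linarith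
      · -- q ≤ j < p impossible given q ≥ p... q = p or p+1, so q ≤ j < p impossible
        omega
    · -- j = p
      rcases hq2 with h2 | h2
      · have e1 : v' j = v (j+1) := hv3 j (by omega) (by omega)
        have e2 : u' j = u (j+1) := hu3 j (by omega) (by omega)
        have e3 := (hint (j+1) (by omega)).1
        linarith
      · have e1 : v j = v' j := hv1 j (by omega)
        have e3 := (hint j (by omega)).1
        have e4 : β ≤ u' j := by rw [h]; exact huge (by omega)
        have e5 : u j = β := by rw [h]; exact hu2
        linarith
    · have e1 : v' j = v (j+1) := hv3 j (by omega) (by omega)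
      have e2 : u' j = u (j+1) := hu3 j (by omega) (by omega)
      have e3 := (hint (j+1) (by omega)).1
      linarith
  · -- u' j ≤ v' (j+1)
    rcases Nat.lt_trichotomy (j+1) q with h | h | h
    · have e1 : v (j+1) = v' (j+1) := hv1 (j+1) h
      have e2 : u j = u' j := hu1 j (by omega)
      have e3 := (hint j (by omega)).2
      linarith
    · -- j+1 = q
      rcases hq2 with h2 | h2
      · -- q = p : u' j = u j (j < p), u j ≤ v (j+1) = v q = β ≤ v' q = v' (j+1)
        have e1 : u j = u' j := hu1 j (by omega)
        have e2 := (hint j (by omega)).2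
        have e3 : v (j+1) = β := by rw [h]; exact hv2
        have e4 : β ≤ v' (j+1) := by rw [h]; exact hvge (by omega)
        linarith
      · -- q = p+1, j = p : u' p = u (p+1) ≤ v (p+2) = v' (p+1)
        have hjp : j = p := by omega
        have e1 : u' j = u (j+1) := hu3 j (by omega) (by omega)
        have e2 := (hint (j+1) (by omega)).2
        have e3 : v' (j+1) = v (j+2) := hv3 (j+1) (by omega) (by omega)
        linarith
    · have e1 : u' j = u (j+1) := hu3 j (by omega) (by omega)
      have e2 := (hint (j+1) (by omega)).2
      have e3 : v' (j+1) = v (j+2) := hv3 (j+1) (by omega) (by omega)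
      linarith
end Transfer

lemma rel_unpack' {β : ℝ} {N p : ℕ} {u u' : ℕ → ℝ} (hp : p ≤ N)
    (hrel : ∀ j < N + 1, u j = if j < p then u' j else if j = p then β else u' (j-1)) :
    (∀ j < p, u j = u' j) ∧ u p = β ∧ (∀ j, p ≤ j → j < N → u' j = u (j+1)) := by
  refine ⟨fun j hj => by rw [hrel j (by omega), if_pos hj], ?_, ?_⟩
  · rw [hrel p (by omega), if_neg (by omega), if_pos rfl]
  · intro j h1 h2
    rw [hrel (j+1) (by omega), if_neg (by omega), if_neg (by omega)]
    simp

section Transfer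
variable {β : ℝ} {M p q : ℕ} {u u' v v' : ℕ → ℝ}

lemma up_alt (hpM : p ≤ M) (hqM : q ≤ M)
    (hu : ∀ j < M + 1, u j = if j < p then u' j else if j = p then β else u' (j-1))
    (hult : ∀ j < p, u' j < β) (huge : p < M → β ≤ u' p)
    (hv : ∀ j < M + 1, v j = if j < q then v' j else if j = q then β else v' (j-1))
    (hvlt : ∀ j < q, v' j < β) (hvge : q < M → β ≤ v' q)
    (hint1 : ∀ j < M, u' j ≤ v' j) (hint2 : ∀ j, j + 1 < M → v' j ≤ u' (j+1)) :
    (∀ j < M + 1, u j ≤ v j) ∧ (∀ j, j + 1 < M + 1 → v j ≤ u (j+1)) := by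
  obtain ⟨hu1, hu2, hu3⟩ := rel_unpack' hpM hu
  obtain ⟨hv1, hv2, hv3⟩ := rel_unpack' hqM hv
  have hq2 : q = p ∨ q + 1 = p := by
    rcases Nat.lt_or_ge p q with h | h
    · exfalso
      have h1 := huge (by omega)
      have h2 := hvlt p h
      have h3 := hint1 p (by omega)
      linarith
    · rcases Nat.lt_or_ge (q+1) p with h' | h'
      · exfalso
        have h1 := hvge (by omega)
        have h2 := hult (q+1) h'
        have h3 := hint2 q (by omega)
        linarith
      · omega
  constructor
  · intro j hj
    rcases Nat.lt_trichotomy j p with h | h | h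
    · rcases hq2 with h2 | h2
      · have e1 : u j = u' j := hu1 j h
        have e2 : v j = v' j := hv1 j (by omega)
        have e3 := hint1 j (by omega)
        linarith
      · rcases Nat.lt_trichotomy j q with h3 | h3 | h3
        · have e1 : u j = u' j := hu1 j h
          have e2 : v j = v' j := hv1 j h3
          have e3 := hint1 j (by omega)
          linarith
        · have e1 : u j = u' j := hu1 j h
          have e2 : v j = β := by rw [h3]; exact hv2
          have e3 := hult j h
          linarith
        · omega
    · rcases hq2 with h2 | h2
      · have e1 : u j = β := by rw [h]; exact hu2
        have e2 : v j = β := by rw [h, ← h2]; exact hv2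
        linarith
      · have e1 : u j = β := by rw [h]; exact hu2
        have e2 : v' q = v (q+1) := hv3 q (by omega) (by omega)
        have e3 : β ≤ v' q := hvge (by omega)
        have e4 : q + 1 = j := by omega
        rw [e4] at e2
        linarith
    · obtain ⟨k, rfl⟩ : ∃ k, j = k + 1 := ⟨j-1, by omega⟩
      have e1 : u' k = u (k+1) := hu3 k (by omega) (by omega)
      have e2 : v' k = v (k+1) := hv3 k (by omega) (by omega)
      have e3 := hint1 k (by omega)
      linarith
  · intro j hj
    rcases Nat.lt_trichotomy j p with h | h | h
    · rcases hq2 with h2 | h2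
      · rcases Nat.lt_or_ge (j+1) p with h3 | h3
        · have e1 : v j = v' j := hv1 j (by omega)
          have e2 : u (j+1) = u' (j+1) := hu1 (j+1) h3
          have e3 := hint2 j (by omega)
          linarith
        · have h4 : j + 1 = p := by omega
          have e1 : v j = v' j := hv1 j (by omega)
          have e2 : u (j+1) = β := by rw [h4]; exact hu2
          have e3 := hvlt j (by omega)
          linarith
      · rcases Nat.lt_trichotomy j q with h3 | h3 | h3
        · have e1 : v j = v' j := hv1 j h3
          have e2 : u (j+1) = u' (j+1) := hu1 (j+1) (by omega)
          have e3 := hint2 j (by omega)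
          linarith
        · have e1 : v j = β := by rw [h3]; exact hv2
          have e2 : u (j+1) = β := by rw [show j+1 = p by omega]; exact hu2
          linarith
        · omega
    · rcases hq2 with h2 | h2
      · have e1 : v j = β := by rw [h, ← h2]; exact hv2
        have e2 : β ≤ u' p := huge (by omega)
        have e3 : u' p = u (p+1) := hu3 p (by omega) (by omega)
        have e4 : p + 1 = j + 1 := by omega
        rw [e4] at e3
        linarith
      · have e1 : v' q = v (q+1) := hv3 q (by omega) (by omega)
        have e3 : u' p = u (p+1) := hu3 p (by omega) (by omega)
        have e5 := hint2 q (by omega)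
        rw [h2] at e5 e1
        rw [h]
        linarith
    · obtain ⟨k, rfl⟩ : ∃ k, j = k + 1 := ⟨j-1, by omega⟩
      have e1 : v' k = v (k+1) := hv3 k (by omega) (by omega)
      have e2 : u' (k+1) = u (k+2) := hu3 (k+1) (by omega) (by omega)
      have e3 := hint2 k (by omega)
      linarith

lemma down_alt (hpM : p ≤ M) (hqM : q ≤ M)
    (hu : ∀ j < M + 1, u j = if j < p then u' j else if j = p then β else u' (j-1))
    (hult : ∀ j < p, u' j < β) (huge : p < M → β ≤ u' p)
    (hv : ∀ j < M + 1, v j = if j < q then v' j else if j = q then β else v' (j-1))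
    (hvlt : ∀ j < q, v' j < β) (hvge : q < M → β ≤ v' q)
    (hint1 : ∀ j < M + 1, u j ≤ v j) (hint2 : ∀ j, j + 1 < M + 1 → v j ≤ u (j+1)) :
    (∀ j < M, u' j ≤ v' j) ∧ (∀ j, j + 1 < M → v' j ≤ u' (j+1)) := by
  obtain ⟨hu1, hu2, hu3⟩ := rel_unpack' hpM hu
  obtain ⟨hv1, hv2, hv3⟩ := rel_unpack' hqM hv
  have hq2 : q = p ∨ q + 1 = p := by
    rcases Nat.lt_or_ge p q with h | h
    · exfalso
      have h1 := hint1 p (by omega)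
      have e1 : v p = v' p := hv1 p h
      have e2 := hvlt p h
      linarith [hu2]
    · rcases Nat.lt_or_ge (q+1) p with h' | h'
      · exfalso
        have h1 := hint2 q (by omega)
        have e1 : u (q+1) = u' (q+1) := hu1 (q+1) h'
        have e2 := hult (q+1) h'
        linarith [hv2]
      · omega
  constructor
  · intro j hj
    rcases hq2 with h2 | h2
    · rcases Nat.lt_or_ge j p with h | h
      · have e1 : u j = u' j := hu1 j h
        have e2 : v j = v' j := hv1 j (by omega)
        have e3 := hint1 j (by omega)
        linarith
      · have e1 : u' j = u (j+1) := hu3 j (by omega) (by omega)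
        have e2 : v' j = v (j+1) := hv3 j (by omega) (by omega)
        have e3 := hint1 (j+1) (by omega)
        linarith
    · rcases Nat.lt_trichotomy j q with h | h | h
      · have e1 : u j = u' j := hu1 j (by omega)
        have e2 : v j = v' j := hv1 j h
        have e3 := hint1 j (by omega)
        linarith
      · have e1 := hult j (by omega)
        have e2 : β ≤ v' j := by rw [h]; exact hvge (by omega)
        linarith
      · have e1 : u' j = u (j+1) := hu3 j (by omega) (by omega)
        have e2 : v' j = v (j+1) := hv3 j (by omega) (by omega)
        have e3 := hint1 (j+1) (by omega)
        linarith
  · intro j hj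
    rcases hq2 with h2 | h2
    · rcases Nat.lt_trichotomy (j+1) p with h | h | h
      · have e1 : v j = v' j := hv1 j (by omega)
        have e2 : u (j+1) = u' (j+1) := hu1 (j+1) h
        have e3 := hint2 j (by omega)
        linarith
      · have e1 : v j = v' j := hv1 j (by omega)
        have e2 := hint2 j (by omega)
        have e3 : u (j+1) = β := by rw [h]; exact hu2
        have e4 : β ≤ u' (j+1) := by rw [h]; exact huge (by omega)
        linarith
      · have e1 : v' j = v (j+1) := hv3 j (by omega) (by omega)
        have e2 : u' (j+1) = u (j+2) := hu3 (j+1) (by omega) (by omega)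
        have e3 := hint2 (j+1) (by omega)
        linarith
    · rcases Nat.lt_trichotomy j q with h | h | h
      · have e1 : v j = v' j := hv1 j h
        have e2 : u (j+1) = u' (j+1) := hu1 (j+1) (by omega)
        have e3 := hint2 j (by omega)
        linarith
      · have e1 : v' j = v (j+1) := hv3 j (by omega) (by omega)
        have e2 : u' (j+1) = u (j+2) := hu3 (j+1) (by omega) (by omega)
        have e3 := hint2 (j+1) (by omega)
        linarith
      · have e1 : v' j = v (j+1) := hv3 j (by omega) (by omega)
        have e2 : u' (j+1) = u (j+2) := hu3 (j+1) (by omega) (by omega)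
        have e3 := hint2 (j+1) (by omega)
        linarith
end Transfer

lemma sum_lc {n : ℕ} (f : Fin n → Polynomial ℝ) (D : ℕ)
    (hle : ∀ i, (f i).natDegree ≤ D)
    (h1 : ∀ i, 0 ≤ (f i).coeff D) (h2 : ∃ i, 0 < (f i).coeff D) :
    (∑ i, f i).natDegree = D ∧ 0 < (∑ i, f i).leadingCoeff ∧ (∑ i, f i) ≠ 0 := by
  have hc : (∑ i, f i).coeff D = ∑ i, (f i).coeff D := by
    simp [Polynomial.finset_sum_coeff]
  have hpos : 0 < (∑ i, f i).coeff D := by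
    rw [hc]
    apply Finset.sum_pos' (fun i _ => h1 i)
    obtain ⟨i, hi⟩ := h2
    exact ⟨i, Finset.mem_univ i, hi⟩
  have hdle : (∑ i, f i).natDegree ≤ D :=
    Polynomial.natDegree_sum_le_of_forall_le _ _ (fun i _ => hle i)
  have hdge : D ≤ (∑ i, f i).natDegree := le_natDegree_of_ne_zero (ne_of_gt hpos)
  have hdeq : (∑ i, f i).natDegree = D := le_antisymm hdle hdge
  have hlc : 0 < (∑ i, f i).leadingCoeff := by
    rw [Polynomial.leadingCoeff, hdeq]; exact hpos
  exact ⟨hdeq, hlc, fun h => by simp [h] at hlc⟩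

lemma factor_root {g : Polynomial ℝ} (hg : RealRooted g) (hlc : 0 < g.leadingCoeff)
    {β : ℝ} (hβ : g.eval β = 0) :
    ∃ g₁, g = (X - C β) * g₁ ∧ RealRooted g₁ ∧ 0 < g₁.leadingCoeff ∧
      g.roots = β ::ₘ g₁.roots := by
  obtain ⟨g₁, hq⟩ := dvd_iff_isRoot.mpr hβ
  have hg₁ne : g₁ ≠ 0 := by
    intro h; rw [h, mul_zero] at hq; exact hg.1 hq
  have hXne : (X - C β : Polynomial ℝ) ≠ 0 := X_sub_C_ne_zero β
  have hroots : g.roots = β ::ₘ g₁.roots := by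
    rw [hq, roots_mul (by rw [← hq]; exact hg.1), roots_X_sub_C, Multiset.singleton_add]
  have hdeg : g.natDegree = g₁.natDegree + 1 := by
    rw [hq, natDegree_mul hXne hg₁ne, natDegree_X_sub_C]; omega
  have hcard : g.roots.card = g₁.roots.card + 1 := by rw [hroots]; simp
  have hall : AllRootsReal g₁ := by
    have := hg.2
    rw [AllRootsReal] at *
    omega
  have hlc₁ : 0 < g₁.leadingCoeff := by
    have : g.leadingCoeff = g₁.leadingCoeff := by
      rw [hq, leadingCoeff_mul, leadingCoeff_X_sub_C, one_mul]
    rwa [this] at hlc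
  exact ⟨g₁, hq, ⟨hg₁ne, hall⟩, hlc₁, hroots⟩

-- squeeze part (i): repeated root of g is a root of each f
lemma squeeze_i {g fp : Polynomial ℝ} (h : AlternatesLeft g fp ∨ Interlaces g fp)
    {k : ℕ} (hk : k + 1 < g.roots.card) (heq : nthRoot g k = nthRoot g (k+1)) :
    fp.eval (nthRoot g k) = 0 := by
  rcases h with ⟨hg, hfp, hcard, h1, h2⟩ | ⟨hg, hfp, hcard, h12⟩
  · have e1 : nthRoot g k ≤ nthRoot fp k := h1 k (by omega)
    have e2 : nthRoot fp k ≤ nthRoot g (k+1) := h2 k hk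
    have : nthRoot fp k = nthRoot g k := by rw [heq]; linarith
    rw [← this]
    exact nthRoot_isRoot fp hfp.1 (by omega)
  · have e1 : nthRoot g k ≤ nthRoot fp (k+1) := (h12 k (by omega)).2
    have e2 : nthRoot fp (k+1) ≤ nthRoot g (k+1) := (h12 (k+1) hk).1
    have : nthRoot fp (k+1) = nthRoot g k := by rw [heq]; linarith
    rw [← this]
    exact nthRoot_isRoot fp hfp.1 (by omega)

-- squeeze part (ii)
lemma squeeze_ii {g fp : Polynomial ℝ} (h : AlternatesLeft fp g ∨ Interlaces fp g)
    {k : ℕ} (hk : k + 1 < g.roots.card) (heq : nthRoot g k = nthRoot g (k+1)) :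
    fp.eval (nthRoot g k) = 0 := by
  rcases h with ⟨hfp, hg, hcard, h1, h2⟩ | ⟨hfp, hg, hcard, h12⟩
  · have e1 : nthRoot g k ≤ nthRoot fp (k+1) := h2 k (by omega)
    have e2 : nthRoot fp (k+1) ≤ nthRoot g (k+1) := h1 (k+1) (by omega)
    have : nthRoot fp (k+1) = nthRoot g k := by rw [heq]; linarith
    rw [← this]
    exact nthRoot_isRoot fp hfp.1 (by omega)
  · have e1 : nthRoot g k ≤ nthRoot fp k := (h12 k (by omega)).1
    have e2 : nthRoot fp k ≤ nthRoot g (k+1) := (h12 k (by omega)).2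
    have : nthRoot fp k = nthRoot g k := by rw [heq]; linarith
    rw [← this]
    exact nthRoot_isRoot fp hfp.1 (by omega)

-- sign condition part (i)
lemma sigcond_i {g fp : Polynomial ℝ} (hfp : RealRooted fp) (hlc : 0 < fp.leadingCoeff)
    (h : AlternatesLeft g fp ∨ Interlaces g fp) {k : ℕ} (hk : k < g.roots.card) :
    0 ≤ (-1)^(g.roots.card - k) * fp.eval (nthRoot g k) := by
  rcases h with ⟨hg, _, hcard, h1, h2⟩ | ⟨hg, _, hcard, h12⟩
  · have := sign_eval fp hfp hlc (nthRoot g k) k (by omega)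
      (fun j hj => le_trans (h2 j (by omega)) (nthRoot_mono g (by omega) hk))
      (fun j hjk hj => le_trans (nthRoot_mono g hjk (by omega)) (h1 j (by omega)))
    rwa [hcard] at this
  · have := sign_eval fp hfp hlc (nthRoot g k) (k+1) (by omega)
      (fun j hj => le_trans ((h12 j (by omega)).1) (nthRoot_mono g (by omega) hk))
      (fun j hjk hj => by
        obtain ⟨j', rfl⟩ : ∃ j', j = j' + 1 := ⟨j - 1, by omega⟩
        exact le_trans (nthRoot_mono g (by omega : k ≤ j') (by omega)) ((h12 j' (by omega)).2))
    have he : fp.roots.card - (k+1) = g.roots.card - k := by omega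
    rwa [he] at this

-- sign condition part (ii)
lemma sigcond_ii {g fp : Polynomial ℝ} (hfp : RealRooted fp) (hlc : 0 < fp.leadingCoeff)
    (h : AlternatesLeft fp g ∨ Interlaces fp g) {k : ℕ} (hk : k < g.roots.card) :
    0 ≤ (-1)^(g.roots.card - 1 - k) * fp.eval (nthRoot g k) := by
  rcases h with ⟨_, hg, hcard, h1, h2⟩ | ⟨_, hg, hcard, h12⟩
  · have := sign_eval fp hfp hlc (nthRoot g k) (k+1) (by omega)
      (fun j hj => le_trans (h1 j (by omega)) (nthRoot_mono g (by omega) hk))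
      (fun j hjk hj => by
        obtain ⟨j', rfl⟩ : ∃ j', j = j' + 1 := ⟨j - 1, by omega⟩
        exact le_trans (nthRoot_mono g (by omega : k ≤ j') (by omega)) (h2 j' (by omega)))
    have he : fp.roots.card - (k+1) = g.roots.card - 1 - k := by omega
    rwa [he] at this
  · have := sign_eval fp hfp hlc (nthRoot g k) k (by omega)
      (fun j hj => le_trans ((h12 j (by omega)).2) (nthRoot_mono g (by omega) hk))
      (fun j hjk hj => le_trans (nthRoot_mono g hjk (by omega)) ((h12 j (by omega)).1))
    have he : fp.roots.card - k = g.roots.card - 1 - k := by omega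
    rwa [he] at this

-- opposite adjacent signs give a negative product
lemma sign_flip {a b : ℝ} {e : ℕ} (h1 : 0 < (-1)^(e+1) * a) (h2 : 0 < (-1)^e * b) :
    a * b < 0 := by
  have hsq : ((-1:ℝ)^e) * ((-1:ℝ)^e) = 1 := by
    rw [← pow_add]
    exact Even.neg_one_pow ⟨e, by ring⟩
  rw [pow_succ] at h1
  nlinarith

lemma master_i : ∀ m : ℕ, ∀ (n : ℕ), 1 ≤ n → ∀ (g : Polynomial ℝ) (f : Fin n → Polynomial ℝ),
    g.roots.card = m → RealRooted g → 0 < g.leadingCoeff →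
    (∀ i, RealRooted (f i)) → (∀ i, 0 < (f i).leadingCoeff) →
    (∀ i, AlternatesLeft g (f i) ∨ Interlaces g (f i)) →
    RealRooted (∑ i, f i) ∧ (Interlaces g (∑ i, f i) ∨ AlternatesLeft g (∑ i, f i)) := by
  intro m
  induction m using Nat.strong_induction_on with
  | _ m IH =>
  intro n hn g f hm hg hglc hf hflc hyp
  have hcards : ∀ i, (f i).roots.card = m ∨ (f i).roots.card = m + 1 := by
    intro i
    rcases hyp i with ⟨_, _, hc, _⟩ | ⟨_, _, hc, _⟩
    · left; omega
    · right; omega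
  by_cases hred : ∃ k < g.roots.card, ∀ i, (f i).eval (nthRoot g k) = 0
  · -- reduction branch
    obtain ⟨k, hk, hall⟩ := hred
    set β := nthRoot g k with hβdef
    have hβ : g.eval β = 0 := nthRoot_isRoot g hg.1 hk
    obtain ⟨g₁, hgfac, hg₁, hg₁lc, hgroots⟩ := factor_root hg hglc hβ
    choose f₁ hffac hf₁ hf₁lc hfroots using fun i => factor_root (hf i) (hflc i) (hall i)
    have hgcard : g.roots.card = g₁.roots.card + 1 := by rw [hgroots]; simp
    have hfcard : ∀ i, (f i).roots.card = (f₁ i).roots.card + 1 := by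
      intro i; rw [hfroots i]; simp
    obtain ⟨p, hp, hplt, hpge, hprel⟩ := nthRoot_cons hgroots
    set M := g₁.roots.card with hMdef
    have hyp₁ : ∀ i, AlternatesLeft g₁ (f₁ i) ∨ Interlaces g₁ (f₁ i) := by
      intro i
      obtain ⟨q, hq, hqlt, hqge, hqrel⟩ := nthRoot_cons (hfroots i)
      rcases hyp i with ⟨_, _, hc, hA1, hA2⟩ | ⟨_, _, hc, hI⟩
      · left
        have hcM : (f₁ i).roots.card = M := by
          have := hfcard i; omega
        have := down_alt (β := β) (M := M) (p := p) (q := q)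
          (u := nthRoot g) (u' := nthRoot g₁) (v := nthRoot (f i)) (v' := nthRoot (f₁ i))
          hp (by omega) (fun j _ => hprel j) hplt hpge
          (fun j _ => hqrel j) (fun j hj => hqlt j hj) (fun h => hqge (by omega))
          (fun j hj => hA1 j (by omega)) (fun j hj => hA2 j (by omega))
        exact ⟨hg₁, hf₁ i, by omega, fun j hj => this.1 j (by omega),
          fun j hj => this.2 j (by omega)⟩
      · right
        have hcM : (f₁ i).roots.card = M + 1 := by
          have := hfcard i; omega
        have := down_inter (β := β) (M := M) (p := p) (q := q)
          (u := nthRoot g) (u' := nthRoot g₁) (v := nthRoot (f i)) (v' := nthRoot (f₁ i))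
          hp (by omega) (fun j _ => hprel j) hplt hpge
          (fun j _ => hqrel j) (fun j hj => hqlt j hj) (fun h => hqge (by omega))
          (fun j hj => hI j (by omega))
        exact ⟨hg₁, hf₁ i, by omega, fun j hj => this j (by omega)⟩
    have hIH := IH M (by omega) n hn g₁ f₁ rfl hg₁ hg₁lc hf₁ hf₁lc hyp₁
    set F₁ := ∑ i, f₁ i with hF₁def
    have hFfac : (∑ i, f i) = (X - C β) * F₁ := by
      rw [hF₁def, Finset.mul_sum]
      exact Finset.sum_congr rfl (fun i _ => hffac i)
    set F := ∑ i, f i with hFdef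
    have hF₁ne : F₁ ≠ 0 := hIH.1.1
    have hFne : F ≠ 0 := by
      rw [hFfac]
      exact mul_ne_zero (X_sub_C_ne_zero β) hF₁ne
    have hFroots : F.roots = β ::ₘ F₁.roots := by
      rw [hFfac, roots_mul (by rw [← hFfac]; exact hFne), roots_X_sub_C,
        Multiset.singleton_add]
    have hFcard : F.roots.card = F₁.roots.card + 1 := by rw [hFroots]; simp
    have hFdeg : F.natDegree = F₁.natDegree + 1 := by
      rw [hFfac, natDegree_mul (X_sub_C_ne_zero β) hF₁ne, natDegree_X_sub_C]; omega
    have hFrr : RealRooted F := by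
      refine ⟨hFne, ?_⟩
      have := hIH.1.2
      rw [AllRootsReal] at *
      omega
    obtain ⟨q, hq, hqlt, hqge, hqrel⟩ := nthRoot_cons hFroots
    refine ⟨hFrr, ?_⟩
    rcases hIH.2 with ⟨_, _, hc, hI⟩ | ⟨_, _, hc, hA1, hA2⟩
    · -- Interlaces g₁ F₁  (card F₁ = M + 1) → Interlaces g F
      left
      have := up_inter (β := β) (M := M) (p := p) (q := q)
        (u := nthRoot g) (u' := nthRoot g₁) (v := nthRoot F) (v' := nthRoot F₁)
        hp (by omega) (fun j _ => hprel j) hplt hpge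
        (fun j _ => hqrel j) (fun j hj => hqlt j hj) (fun h => hqge (by omega))
        (fun j hj => hI j (by omega))
      exact ⟨hg, hFrr, by omega, fun j hj => this j (by omega)⟩
    · -- AlternatesLeft g₁ F₁ (card F₁ = M) → AlternatesLeft g F
      right
      have := up_alt (β := β) (M := M) (p := p) (q := q)
        (u := nthRoot g) (u' := nthRoot g₁) (v := nthRoot F) (v' := nthRoot F₁)
        hp (by omega) (fun j _ => hprel j) hplt hpge
        (fun j _ => hqrel j) (fun j hj => hqlt j hj) (fun h => hqge (by omega))
        (fun j hj => hA1 j (by omega)) (fun j hj => hA2 j (by omega))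
      exact ⟨hg, hFrr, by omega, fun j hj => this.1 j (by omega),
        fun j hj => this.2 j (by omega)⟩
  · -- strict branch
    push_neg at hred
    set F := ∑ i, f i with hFdef
    have hadj : ∀ k, k + 1 < m → nthRoot g k < nthRoot g (k+1) := by
      intro k hk1
      rcases lt_or_ge (nthRoot g k) (nthRoot g (k+1)) with h | h
      · exact h
      · exfalso
        have heq : nthRoot g k = nthRoot g (k+1) :=
          le_antisymm (nthRoot_mono g (by omega) (by omega)) h
        obtain ⟨i, hi⟩ := hred k (by omega)
        exact hi (squeeze_i (hyp i) (by omega) heq)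
    have hmono2 : ∀ a b, a < b → b < m → nthRoot g a < nthRoot g b := by
      intro a b hab hb
      calc nthRoot g a ≤ nthRoot g (b-1) := nthRoot_mono g (by omega) (by omega)
        _ < nthRoot g b := by
            have := hadj (b-1) (by omega)
            rwa [show b - 1 + 1 = b by omega] at this
    have hFsign : ∀ k, k < m → 0 < (-1)^(m-k) * F.eval (nthRoot g k) := by
      intro k hk
      have hFe : F.eval (nthRoot g k) = ∑ i, (f i).eval (nthRoot g k) := by
        rw [hFdef, eval_finset_sum]
      rw [hFe, Finset.mul_sum]
      apply Finset.sum_pos'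
      · intro i _
        have := sigcond_i (hf i) (hflc i) (hyp i) (k := k) (by omega)
        rwa [hm] at this
      · obtain ⟨i, hi⟩ := hred k (by omega)
        refine ⟨i, Finset.mem_univ i, ?_⟩
        have h0 := sigcond_i (hf i) (hflc i) (hyp i) (k := k) (by omega)
        rw [hm] at h0
        have : (-1:ℝ)^(m-k) * (f i).eval (nthRoot g k) ≠ 0 := by
          apply mul_ne_zero _ hi
          apply pow_ne_zero; norm_num
        exact lt_of_le_of_ne h0 (Ne.symm this)
    by_cases hdeg : ∀ i, (f i).roots.card = m
    · -- all degree m : conclusion AlternatesLeft g F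
      have hnd : ∀ i, (f i).natDegree = m := fun i => by
        have := (hf i).2; rw [AllRootsReal] at this; rw [← this, hdeg i]
      obtain ⟨hFdeg, hFlc, hFne⟩ := sum_lc f m (fun i => le_of_eq (hnd i))
        (fun i => by
          have : (f i).coeff m = (f i).leadingCoeff := by
            rw [Polynomial.leadingCoeff, hnd i]
          rw [this]; exact (hflc i).le)
        ⟨⟨0, hn⟩, by
          have : (f ⟨0, hn⟩).coeff m = (f ⟨0, hn⟩).leadingCoeff := by
            rw [Polynomial.leadingCoeff, hnd ⟨0, hn⟩]
          rw [this]; exact hflc ⟨0, hn⟩⟩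
      have hex : ∀ k, ∃ x, k < m →
          (nthRoot g k < x ∧ (k+1 < m → x < nthRoot g (k+1)) ∧ F.eval x = 0) := by
        intro k
        by_cases hkm : k < m
        · rcases Nat.lt_or_ge (k+1) m with hk1 | hk1
          · -- interior interval
            obtain ⟨x, hx1, hx2, hx3⟩ := root_between F (nthRoot g k) (nthRoot g (k+1))
              (hadj k hk1) (by
                apply sign_flip (e := m - (k+1)) _ (hFsign (k+1) hk1)
                have : m - (k+1) + 1 = m - k := by omega
                rw [this]
                exact hFsign k hkm)
            exact ⟨x, fun _ => ⟨hx1, fun _ => hx2, hx3⟩⟩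
          · -- top interval k = m-1
            have hs := hFsign k hkm
            have hFk : F.eval (nthRoot g k) < 0 := by
              have : m - k = 1 := by omega
              rw [this, pow_one] at hs
              linarith
            obtain ⟨x, hx1, hx3⟩ := exists_root_gt F hFlc _ hFk
            exact ⟨x, fun _ => ⟨hx1, fun h => absurd h (by omega), hx3⟩⟩
        · exact ⟨0, fun h => absurd h hkm⟩
      choose y hy using hex
      obtain ⟨hFrr, hFcard, hFnth⟩ := realRooted_of_roots F hFne y
        (by
          intro i j hij hj
          rw [hFdeg] at hj
          have h1 := hy i (by omega)
          have h2 := hy j (by omega)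
          calc y i < nthRoot g (i+1) := h1.2.1 (by omega)
            _ ≤ nthRoot g j := nthRoot_mono g (by omega) (by omega)
            _ < y j := h2.1)
        (fun k hk => (hy k (by rwa [hFdeg] at hk)).2.2)
      rw [hFdeg] at hFcard hFnth
      refine ⟨hFrr, Or.inr ⟨hg, hFrr, by omega, ?_, ?_⟩⟩
      · intro j hj
        rw [hm] at hj
        rw [hFnth j hj]
        exact ((hy j hj).1).le
      · intro j hj
        rw [hm] at hj
        rw [hFnth j (by omega)]
        exact ((hy j (by omega)).2.1 hj).le
    · -- some degree m+1 : conclusion Interlaces g F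
      push_neg at hdeg
      obtain ⟨i₀, hi₀⟩ := hdeg
      have hci₀ : (f i₀).roots.card = m + 1 := by
        rcases hcards i₀ with h | h
        · exact absurd h hi₀
        · exact h
      have hnd : ∀ i, (f i).natDegree = (f i).roots.card := fun i => by
        have := (hf i).2; rw [AllRootsReal] at this; omega
      obtain ⟨hFdeg, hFlc, hFne⟩ := sum_lc f (m+1)
        (fun i => by rw [hnd i]; rcases hcards i with h | h <;> omega)
        (fun i => by
          rcases hcards i with h | h
          · have : (f i).natDegree < m + 1 := by rw [hnd i]; omega
            rw [Polynomial.coeff_eq_zero_of_natDegree_lt this]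
          · have : (f i).coeff (m+1) = (f i).leadingCoeff := by
              rw [Polynomial.leadingCoeff, hnd i, h]
            rw [this]; exact (hflc i).le)
        ⟨i₀, by
          have : (f i₀).coeff (m+1) = (f i₀).leadingCoeff := by
            rw [Polynomial.leadingCoeff, hnd i₀, hci₀]
          rw [this]; exact hflc i₀⟩
      have hex : ∀ k, ∃ x, k < m + 1 →
          ((0 < k → nthRoot g (k-1) < x) ∧ (k < m → x < nthRoot g k) ∧ F.eval x = 0) := by
        intro k
        by_cases hkm : k < m + 1
        · rcases Nat.eq_zero_or_pos k with rfl | hk0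
          · -- bottom root
            by_cases hm0 : m = 0
            · have htend : Tendsto (fun x => F.eval x) atTop atTop := by
                apply F.tendsto_atTop_of_leadingCoeff_nonneg _ hFlc.le
                rw [← Polynomial.natDegree_pos_iff_degree_pos, hFdeg]
                omega
              obtain ⟨u, hu⟩ := (htend.eventually_gt_atTop 0).exists
              obtain ⟨x, hx1, hx3⟩ := exists_root_lt F hFlc u (by
                rw [hFdeg, hm0, pow_one]
                simpa using hu)
              exact ⟨x, fun _ => ⟨fun h => absurd h (by omega), fun h => absurd h (by omega), hx3⟩⟩
            · obtain ⟨x, hx1, hx3⟩ := exists_root_lt F hFlc (nthRoot g 0) (by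
                rw [hFdeg]
                have hs := hFsign 0 (by omega)
                have : m + 1 = (m - 0) + 1 := by omega
                rw [this, pow_succ]
                nlinarith)
              exact ⟨x, fun _ => ⟨fun h => absurd h (by omega), fun _ => hx1, hx3⟩⟩
          · rcases Nat.lt_or_ge k m with hk1 | hk1
            · -- interior : root in (β_{k-1}, β_k)
              obtain ⟨x, hx1, hx2, hx3⟩ := root_between F (nthRoot g (k-1)) (nthRoot g k)
                (by
                  have := hadj (k-1) (by omega)
                  rwa [show k - 1 + 1 = k by omega] at this)
                (by
                  apply sign_flip (e := m - k) _ (hFsign k hk1)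
                  have : m - k + 1 = m - (k-1) := by omega
                  rw [this]
                  exact hFsign (k-1) (by omega))
              exact ⟨x, fun _ => ⟨fun _ => hx1, fun _ => hx2, hx3⟩⟩
            · -- top root : k = m
              have hkm' : k = m := by omega
              have hs := hFsign (m-1) (by omega)
              have hFk : F.eval (nthRoot g (m-1)) < 0 := by
                have : m - (m-1) = 1 := by omega
                rw [this, pow_one] at hs
                linarith
              obtain ⟨x, hx1, hx3⟩ := exists_root_gt F hFlc _ hFk
              refine ⟨x, fun _ => ⟨fun _ => ?_, fun h => absurd h (by omega), hx3⟩⟩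
              rw [hkm']
              exact hx1
        · exact ⟨0, fun h => absurd h hkm⟩
      choose y hy using hex
      obtain ⟨hFrr, hFcard, hFnth⟩ := realRooted_of_roots F hFne y
        (by
          intro i j hij hj
          rw [hFdeg] at hj
          have h1 := hy i (by omega)
          have h2 := hy j (by omega)
          calc y i < nthRoot g i := h1.2.1 (by omega)
            _ ≤ nthRoot g (j-1) := nthRoot_mono g (by omega) (by omega)
            _ < y j := h2.1 (by omega))
        (fun k hk => (hy k (by rwa [hFdeg] at hk)).2.2)
      rw [hFdeg] at hFcard hFnth
      refine ⟨hFrr, Or.inl ⟨hg, hFrr, by omega, ?_⟩⟩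
      intro j hj
      rw [hm] at hj
      constructor
      · rw [hFnth j (by omega)]
        exact ((hy j (by omega)).2.1 hj).le
      · rw [hFnth (j+1) (by omega)]
        have h2 := (hy (j+1) (by omega)).1 (by omega)
        rw [show j + 1 - 1 = j by omega] at h2
        exact h2.le

lemma master_ii : ∀ m : ℕ, ∀ (n : ℕ), 1 ≤ n → ∀ (g : Polynomial ℝ) (f : Fin n → Polynomial ℝ),
    g.roots.card = m → RealRooted g → 0 < g.leadingCoeff →
    (∀ i, RealRooted (f i)) → (∀ i, 0 < (f i).leadingCoeff) →
    (∀ i, AlternatesLeft (f i) g ∨ Interlaces (f i) g) →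
    RealRooted (∑ i, f i) ∧ (Interlaces (∑ i, f i) g ∨ AlternatesLeft (∑ i, f i) g) := by
  intro m
  induction m using Nat.strong_induction_on with
  | _ m IH =>
  intro n hn g f hm hg hglc hf hflc hyp
  have hcards : ∀ i, (f i).roots.card = m ∨ (f i).roots.card + 1 = m := by
    intro i
    rcases hyp i with ⟨_, _, hc, _⟩ | ⟨_, _, hc, _⟩
    · left; omega
    · right; omega
  by_cases hred : ∃ k < g.roots.card, ∀ i, (f i).eval (nthRoot g k) = 0
  · -- reduction branch
    obtain ⟨k, hk, hall⟩ := hred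
    set β := nthRoot g k with hβdef
    have hβ : g.eval β = 0 := nthRoot_isRoot g hg.1 hk
    obtain ⟨g₁, hgfac, hg₁, hg₁lc, hgroots⟩ := factor_root hg hglc hβ
    choose f₁ hffac hf₁ hf₁lc hfroots using fun i => factor_root (hf i) (hflc i) (hall i)
    have hgcard : g.roots.card = g₁.roots.card + 1 := by rw [hgroots]; simp
    have hfcard : ∀ i, (f i).roots.card = (f₁ i).roots.card + 1 := by
      intro i; rw [hfroots i]; simp
    obtain ⟨p, hp, hplt, hpge, hprel⟩ := nthRoot_cons hgroots
    set M := g₁.roots.card with hMdef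
    have hyp₁ : ∀ i, AlternatesLeft (f₁ i) g₁ ∨ Interlaces (f₁ i) g₁ := by
      intro i
      obtain ⟨q, hq, hqlt, hqge, hqrel⟩ := nthRoot_cons (hfroots i)
      rcases hyp i with ⟨_, _, hc, hA1, hA2⟩ | ⟨_, _, hc, hI⟩
      · left
        have hcM : (f₁ i).roots.card = M := by
          have := hfcard i; omega
        have := down_alt (β := β) (M := M) (p := q) (q := p)
          (u := nthRoot (f i)) (u' := nthRoot (f₁ i)) (v := nthRoot g) (v' := nthRoot g₁)
          (by omega) (by omega) (fun j _ => hqrel j) (fun j hj => hqlt j hj)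
          (fun h => hqge (by omega))
          (fun j _ => hprel j) hplt (fun h => hpge (by omega))
          (fun j hj => hA1 j (by omega)) (fun j hj => hA2 j (by omega))
        exact ⟨hf₁ i, hg₁, by omega, fun j hj => this.1 j (by omega),
          fun j hj => this.2 j (by omega)⟩
      · right
        have hcM : (f₁ i).roots.card + 1 = M := by
          have h1 := hfcard i; omega
        have := down_inter (β := β) (M := (f₁ i).roots.card) (p := q) (q := p)
          (u := nthRoot (f i)) (u' := nthRoot (f₁ i)) (v := nthRoot g) (v' := nthRoot g₁)
          (by omega) (by omega) (fun j _ => hqrel j) (fun j hj => hqlt j hj)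
          (fun h => hqge (by omega))
          (fun j _ => hprel j) (fun j hj => hplt j hj) (fun h => hpge (by omega))
          (fun j hj => hI j (by omega))
        exact ⟨hf₁ i, hg₁, by omega, fun j hj => this j (by omega)⟩
    have hIH := IH M (by omega) n hn g₁ f₁ rfl hg₁ hg₁lc hf₁ hf₁lc hyp₁
    set F₁ := ∑ i, f₁ i with hF₁def
    have hFfac : (∑ i, f i) = (X - C β) * F₁ := by
      rw [hF₁def, Finset.mul_sum]
      exact Finset.sum_congr rfl (fun i _ => hffac i)
    set F := ∑ i, f i with hFdef
    have hF₁ne : F₁ ≠ 0 := hIH.1.1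
    have hFne : F ≠ 0 := by
      rw [hFfac]
      exact mul_ne_zero (X_sub_C_ne_zero β) hF₁ne
    have hFroots : F.roots = β ::ₘ F₁.roots := by
      rw [hFfac, roots_mul (by rw [← hFfac]; exact hFne), roots_X_sub_C,
        Multiset.singleton_add]
    have hFcard : F.roots.card = F₁.roots.card + 1 := by rw [hFroots]; simp
    have hFdeg : F.natDegree = F₁.natDegree + 1 := by
      rw [hFfac, natDegree_mul (X_sub_C_ne_zero β) hF₁ne, natDegree_X_sub_C]; omega
    have hFrr : RealRooted F := by
      refine ⟨hFne, ?_⟩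
      have := hIH.1.2
      rw [AllRootsReal] at *
      omega
    obtain ⟨q, hq, hqlt, hqge, hqrel⟩ := nthRoot_cons hFroots
    refine ⟨hFrr, ?_⟩
    rcases hIH.2 with ⟨_, _, hc, hI⟩ | ⟨_, _, hc, hA1, hA2⟩
    · -- Interlaces F₁ g₁  (card g₁ = card F₁ + 1) → Interlaces F g
      left
      have := up_inter (β := β) (M := F₁.roots.card) (p := q) (q := p)
        (u := nthRoot F) (u' := nthRoot F₁) (v := nthRoot g) (v' := nthRoot g₁)
        (by omega) (by omega) (fun j _ => hqrel j) (fun j hj => hqlt j hj)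
        (fun h => hqge (by omega))
        (fun j _ => hprel j) (fun j hj => hplt j hj) (fun h => hpge (by omega))
        (fun j hj => hI j (by omega))
      exact ⟨hFrr, hg, by omega, fun j hj => this j (by omega)⟩
    · -- AlternatesLeft F₁ g₁ (card F₁ = M) → AlternatesLeft F g
      right
      have := up_alt (β := β) (M := M) (p := q) (q := p)
        (u := nthRoot F) (u' := nthRoot F₁) (v := nthRoot g) (v' := nthRoot g₁)
        (by omega) (by omega) (fun j _ => hqrel j) (fun j hj => hqlt j (by omega))
        (fun h => hqge (by omega))
        (fun j _ => hprel j) hplt (fun h => hpge (by omega))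
        (fun j hj => hA1 j (by omega)) (fun j hj => hA2 j (by omega))
      exact ⟨hFrr, hg, by omega, fun j hj => this.1 j (by omega),
        fun j hj => this.2 j (by omega)⟩
  · -- strict branch
    push_neg at hred
    set F := ∑ i, f i with hFdef
    have hadj : ∀ k, k + 1 < m → nthRoot g k < nthRoot g (k+1) := by
      intro k hk1
      rcases lt_or_ge (nthRoot g k) (nthRoot g (k+1)) with h | h
      · exact h
      · exfalso
        have heq : nthRoot g k = nthRoot g (k+1) :=
          le_antisymm (nthRoot_mono g (by omega) (by omega)) h
        obtain ⟨i, hi⟩ := hred k (by omega)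
        exact hi (squeeze_ii (hyp i) (by omega) heq)
    have hFsign : ∀ k, k < m → 0 < (-1)^(m-1-k) * F.eval (nthRoot g k) := by
      intro k hk
      have hFe : F.eval (nthRoot g k) = ∑ i, (f i).eval (nthRoot g k) := by
        rw [hFdef, eval_finset_sum]
      rw [hFe, Finset.mul_sum]
      apply Finset.sum_pos'
      · intro i _
        have := sigcond_ii (hf i) (hflc i) (hyp i) (k := k) (by omega)
        rwa [hm] at this
      · obtain ⟨i, hi⟩ := hred k (by omega)
        refine ⟨i, Finset.mem_univ i, ?_⟩
        have h0 := sigcond_ii (hf i) (hflc i) (hyp i) (k := k) (by omega)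
        rw [hm] at h0
        have : (-1:ℝ)^(m-1-k) * (f i).eval (nthRoot g k) ≠ 0 := by
          apply mul_ne_zero _ hi
          apply pow_ne_zero; norm_num
        exact lt_of_le_of_ne h0 (Ne.symm this)
    have hnd : ∀ i, (f i).natDegree = (f i).roots.card := fun i => by
      have := (hf i).2; rw [AllRootsReal] at this; omega
    by_cases hdeg : ∃ i, (f i).roots.card = m
    · -- top degree m : conclusion AlternatesLeft F g
      obtain ⟨i₀, hi₀⟩ := hdeg
      obtain ⟨hFdeg, hFlc, hFne⟩ := sum_lc f m
        (fun i => by rw [hnd i]; rcases hcards i with h | h <;> omega)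
        (fun i => by
          rcases hcards i with h | h
          · have : (f i).coeff m = (f i).leadingCoeff := by
              rw [Polynomial.leadingCoeff, hnd i, h]
            rw [this]; exact (hflc i).le
          · have : (f i).natDegree < m := by rw [hnd i]; omega
            rw [Polynomial.coeff_eq_zero_of_natDegree_lt this])
        ⟨i₀, by
          have : (f i₀).coeff m = (f i₀).leadingCoeff := by
            rw [Polynomial.leadingCoeff, hnd i₀, hi₀]
          rw [this]; exact hflc i₀⟩
      have hex : ∀ k, ∃ x, k < m →
          ((0 < k → nthRoot g (k-1) < x) ∧ x < nthRoot g k ∧ F.eval x = 0) := by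
        intro k
        by_cases hkm : k < m
        · rcases Nat.eq_zero_or_pos k with rfl | hk0
          · obtain ⟨x, hx1, hx3⟩ := exists_root_lt F hFlc (nthRoot g 0) (by
              rw [hFdeg]
              have hs := hFsign 0 (by omega)
              have : m = (m - 1 - 0) + 1 := by omega
              rw [this, pow_succ]
              nlinarith)
            exact ⟨x, fun _ => ⟨fun h => absurd h (by omega), hx1, hx3⟩⟩
          · obtain ⟨x, hx1, hx2, hx3⟩ := root_between F (nthRoot g (k-1)) (nthRoot g k)
              (by
                have := hadj (k-1) (by omega)
                rwa [show k - 1 + 1 = k by omega] at this)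
              (by
                apply sign_flip (e := m - 1 - k) _ (hFsign k hkm)
                have : m - 1 - k + 1 = m - 1 - (k-1) := by omega
                rw [this]
                exact hFsign (k-1) (by omega))
            exact ⟨x, fun _ => ⟨fun _ => hx1, hx2, hx3⟩⟩
        · exact ⟨0, fun h => absurd h hkm⟩
      choose y hy using hex
      obtain ⟨hFrr, hFcard, hFnth⟩ := realRooted_of_roots F hFne y
        (by
          intro i j hij hj
          rw [hFdeg] at hj
          have h1 := hy i (by omega)
          have h2 := hy j (by omega)
          calc y i < nthRoot g i := h1.2.1
            _ ≤ nthRoot g (j-1) := nthRoot_mono g (by omega) (by omega)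
            _ < y j := h2.1 (by omega))
        (fun k hk => (hy k (by rwa [hFdeg] at hk)).2.2)
      rw [hFdeg] at hFcard hFnth
      refine ⟨hFrr, Or.inr ⟨hFrr, hg, by omega, ?_, ?_⟩⟩
      · intro j hj
        rw [hFcard] at hj
        rw [hFnth j hj]
        exact ((hy j hj).2.1).le
      · intro j hj
        rw [hFcard] at hj
        rw [hFnth (j+1) (by omega)]
        have h2 := (hy (j+1) (by omega)).1 (by omega)
        rw [show j + 1 - 1 = j by omega] at h2
        exact h2.le
    · -- all degree m-1 : conclusion Interlaces F g
      push_neg at hdeg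
      have hall1 : ∀ i, (f i).roots.card + 1 = m := by
        intro i
        rcases hcards i with h | h
        · exact absurd h (hdeg i)
        · exact h
      have hm1 : 1 ≤ m := by
        have := hall1 ⟨0, hn⟩
        omega
      obtain ⟨hFdeg, hFlc, hFne⟩ := sum_lc f (m-1)
        (fun i => by rw [hnd i]; have := hall1 i; omega)
        (fun i => by
          have : (f i).coeff (m-1) = (f i).leadingCoeff := by
            rw [Polynomial.leadingCoeff, hnd i]
            congr 1
            have := hall1 i; omega
          rw [this]; exact (hflc i).le)
        ⟨⟨0, hn⟩, by
          have : (f ⟨0, hn⟩).coeff (m-1) = (f ⟨0, hn⟩).leadingCoeff := by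
            rw [Polynomial.leadingCoeff, hnd ⟨0, hn⟩]
            congr 1
            have := hall1 ⟨0, hn⟩; omega
          rw [this]; exact hflc ⟨0, hn⟩⟩
      have hex : ∀ k, ∃ x, k < m - 1 →
          (nthRoot g k < x ∧ x < nthRoot g (k+1) ∧ F.eval x = 0) := by
        intro k
        by_cases hkm : k < m - 1
        · obtain ⟨x, hx1, hx2, hx3⟩ := root_between F (nthRoot g k) (nthRoot g (k+1))
            (hadj k (by omega))
            (by
              apply sign_flip (e := m - 1 - (k+1)) _ (hFsign (k+1) (by omega))
              have : m - 1 - (k+1) + 1 = m - 1 - k := by omega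
              rw [this]
              exact hFsign k (by omega))
          exact ⟨x, fun _ => ⟨hx1, hx2, hx3⟩⟩
        · exact ⟨0, fun h => absurd h hkm⟩
      choose y hy using hex
      obtain ⟨hFrr, hFcard, hFnth⟩ := realRooted_of_roots F hFne y
        (by
          intro i j hij hj
          rw [hFdeg] at hj
          have h1 := hy i (by omega)
          have h2 := hy j (by omega)
          calc y i < nthRoot g (i+1) := h1.2.1
            _ ≤ nthRoot g j := nthRoot_mono g (by omega) (by omega)
            _ < y j := h2.1)
        (fun k hk => (hy k (by rwa [hFdeg] at hk)).2.2)
      rw [hFdeg] at hFcard hFnth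
      refine ⟨hFrr, Or.inl ⟨hFrr, hg, by omega, ?_⟩⟩
      intro j hj
      rw [hFcard] at hj
      constructor
      · rw [hFnth j hj]
        exact ((hy j hj).1).le
      · rw [hFnth j hj]
        exact ((hy j hj).2.1).le

end Aux

/-- Lemma (positive sums preserve interlacing).
Let `g` and `f 1, …, f n` be real-rooted standard polynomials.
(i) If for each `i` either `g ≪ f i` or `g ⪯ f i`, then `F = Σ f i` is real-rooted
with `g ⪯ F` or `g ≪ F`.
(ii) If for each `i` either `f i ≪ g` or `f i ⪯ g`, then `F = Σ f i` is real-rooted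
with `F ⪯ g` or `F ≪ g`. -/
theorem stmt0 (n : ℕ) (hn : 1 ≤ n) (g : Polynomial ℝ) (f : Fin n → Polynomial ℝ)
    (hg : RealRooted g) (hgstd : 0 < g.leadingCoeff)
    (hf : ∀ i, RealRooted (f i)) (hfstd : ∀ i, 0 < (f i).leadingCoeff) :
    ((∀ i, AlternatesLeft g (f i) ∨ Interlaces g (f i)) →
      RealRooted (∑ i, f i) ∧
        (Interlaces g (∑ i, f i) ∨ AlternatesLeft g (∑ i, f i))) ∧
    ((∀ i, AlternatesLeft (f i) g ∨ Interlaces (f i) g) →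
      RealRooted (∑ i, f i) ∧
        (Interlaces (∑ i, f i) g ∨ AlternatesLeft (∑ i, f i) g)) := by
  constructor
  · intro h
    exact master_i g.roots.card n hn g f rfl hg hgstd hf hfstd h
  · intro h
    exact master_ii g.roots.card n hn g f rfl hg hgstd hf hfstd h
end

section
/- Let f, g ∈ ℝ[x], where f has only real zeros and g is nonzero with all its zeros in the interval [−1,0]. Then the diamond product (f ⋄ g)(x) := Σ_{k≥0} (f^{(k)}(x)/k!) (g^{(k)}(x)/k!) x^k (x+1)^k has only real zeros (or is identically zero). -/
open Polynomial

/-- The diamond product `(f ⋄ g)(x) = Σ_k (f^{(k)}(x)/k!) (g^{(k)}(x)/k!) x^k (x+1)^k`. -/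
noncomputable def diamondProd (f g : Polynomial ℝ) : Polynomial ℝ :=
  ∑ k ∈ Finset.range (f.natDegree + g.natDegree + 1),
    C ((k.factorial : ℝ))⁻¹ * (derivative^[k] f) * C ((k.factorial : ℝ))⁻¹ *
      (derivative^[k] g) * (X ^ k * (X + 1) ^ k)

section Aux


/-- Log-derivative of a product of linear factors has negative imaginary part above roots. -/
lemma aux_logderiv (c : ℝ) (z : ℂ) (hz : c < z.im) (s : Multiset ℂ)
    (hs : ∀ r ∈ s, r.im ≤ c) :
    eval z (s.map (fun r => X - C r)).prod ≠ 0 ∧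
    ((eval z (derivative (s.map (fun r => X - C r)).prod)) /
      (eval z (s.map (fun r => X - C r)).prod)).im ≤ 0 ∧
    (s ≠ 0 → ((eval z (derivative (s.map (fun r => X - C r)).prod)) /
      (eval z (s.map (fun r => X - C r)).prod)).im < 0) := by
  induction s using Multiset.induction_on with
  | empty =>
      simp
  | cons r s ih =>
      obtain ⟨h1, h2, _⟩ := ih (fun a ha => hs a (Multiset.mem_cons_of_mem ha))
      have hr : r.im ≤ c := hs r (Multiset.mem_cons_self r s)
      have hzr : (z - r).im > 0 := by simp [Complex.sub_im]; linarith
      have hzr0 : z - r ≠ 0 := fun h => by simp [h] at hzr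
      have hinv : ((z - r)⁻¹).im < 0 := by
        rw [Complex.inv_im]
        apply div_neg_of_neg_of_pos
        · linarith
        · exact Complex.normSq_pos.mpr hzr0
      set M := (s.map (fun r => X - C r)).prod with hM
      have hprod : ((r ::ₘ s).map (fun r => X - C r)).prod = (X - C r) * M := by
        rw [Multiset.map_cons, Multiset.prod_cons]
      rw [hprod]
      have hev : eval z ((X - C r) * M) = (z - r) * eval z M := by simp
      have hne : eval z ((X - C r) * M) ≠ 0 := by
        rw [hev]; exact mul_ne_zero hzr0 h1
      refine ⟨hne, ?_, ?_⟩ <;>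
      · have hder : derivative ((X - C r) * M) = M + (X - C r) * derivative M := by
          rw [derivative_mul, derivative_X_sub_C, one_mul]
        have hratio : eval z (derivative ((X - C r) * M)) / eval z ((X - C r) * M)
            = (z - r)⁻¹ + eval z (derivative M) / eval z M := by
          rw [hder, hev]
          simp only [eval_add, eval_mul, eval_sub, eval_X, eval_C]
          field_simp
        rw [hratio, Complex.add_im]
        first
          | linarith
          | (intro _ ; linarith)
/-- Gauss–Lucas for a half plane. -/
lemma gauss_lucas_halfplane {p : Polynomial ℂ} (hp : p ≠ 0) (hd : p.natDegree ≠ 0) {c : ℝ}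
    (h : ∀ z : ℂ, p.IsRoot z → z.im ≤ c) {z : ℂ} (hz : c < z.im) :
    ¬ (derivative p).IsRoot z := by
  have hsplit : p.Splits := IsAlgClosed.splits p
  have hcard : Multiset.card p.roots = p.natDegree := splits_iff_card_roots.mp hsplit
  have hfac := hsplit.eq_prod_roots
  have hroots : ∀ r ∈ p.roots, r.im ≤ c := fun r hr => h r (isRoot_of_mem_roots hr)
  have hsne : p.roots ≠ 0 := by
    intro h0
    rw [h0] at hcard; simp at hcard; omega
  obtain ⟨h1, _, h3⟩ := aux_logderiv c z hz p.roots hroots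
  have h3' := h3 hsne
  intro hroot
  have hlc : p.leadingCoeff ≠ 0 := leadingCoeff_ne_zero.mpr hp
  have : eval z (derivative p) = p.leadingCoeff * eval z (derivative (p.roots.map (fun r => X - C r)).prod) := by
    conv_lhs => rw [hfac]
    rw [derivative_C_mul, eval_mul, eval_C]
  rw [IsRoot, this] at hroot
  have h0 : eval z (derivative (p.roots.map (fun r => X - C r)).prod) = 0 :=
    (mul_eq_zero.mp hroot).resolve_left hlc
  rw [h0, zero_div] at h3'
  simp at h3'

/-- Iterated Gauss–Lucas. -/
lemma iterate_gauss_lucas {p : Polynomial ℂ} {c : ℝ}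
    (h : ∀ z : ℂ, p.IsRoot z → z.im ≤ c) (n : ℕ) (hn : derivative^[n] p ≠ 0) :
    ∀ z : ℂ, c < z.im → ¬ (derivative^[n] p).IsRoot z := by
  induction n with
  | zero =>
      intro z hz hroot
      exact absurd (h z hroot) (not_le.mpr hz)
  | succ n ih =>
      rw [Function.iterate_succ_apply'] at hn ⊢
      have hq : derivative^[n] p ≠ 0 := by
        intro h0; rw [h0] at hn; simp at hn
      have hqd : (derivative^[n] p).natDegree ≠ 0 := by
        intro h0
        rw [eq_C_of_natDegree_eq_zero h0] at hn
        simp at hn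
      have hqroots : ∀ z : ℂ, (derivative^[n] p).IsRoot z → z.im ≤ c := by
        intro z hroot
        by_contra hgt
        exact ih hq z (not_le.mp hgt) hroot
      intro z hz
      exact gauss_lucas_halfplane hq hqd hqroots hz


lemma splits_of_roots_im_eq_zero :
    ∀ (n : ℕ) (p : Polynomial ℝ), p.natDegree = n →
      (∀ z : ℂ, (p.map (algebraMap ℝ ℂ)).IsRoot z → z.im = 0) →
      p.Splits := by
  intro n
  induction n using Nat.strong_induction_on with
  | _ n ih =>
  intro p hdeg h
  rcases Nat.eq_zero_or_pos n with h0 | hpos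
  · exact Splits.of_natDegree_le_one (by omega)
  have hp0 : p ≠ 0 := fun h0' => by rw [h0'] at hdeg; simp at hdeg; omega
  have hmapdeg : (p.map (algebraMap ℝ ℂ)).natDegree = n := by
    rw [natDegree_map]; exact hdeg
  obtain ⟨z, hz⟩ := Complex.exists_root (f := p.map (algebraMap ℝ ℂ))
    (natDegree_pos_iff_degree_pos.mp (by omega))
  have hzim := h z hz
  have hzre : ((z.re : ℝ) : ℂ) = z := Complex.ext rfl (by simp [hzim])
  have hroot : p.IsRoot z.re := by
    have : (algebraMap ℝ ℂ) (p.eval z.re) = 0 := by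
      rw [← eval₂_at_apply, ← eval_map]
      show eval ((z.re : ℂ)) _ = 0
      rw [hzre]; exact hz
    exact (map_eq_zero_iff _ (algebraMap ℝ ℂ).injective).mp this
  set q := p /ₘ (X - C z.re) with hq
  have hfac : (X - C z.re) * q = p := mul_divByMonic_eq_iff_isRoot.mpr hroot
  have hq0 : q ≠ 0 := by
    intro h0; rw [h0, mul_zero] at hfac; exact hp0 hfac.symm
  have hqdeg : q.natDegree = n - 1 := by
    have := natDegree_mul (p := X - C z.re) (q := q) (X_sub_C_ne_zero z.re) hq0
    rw [hfac, natDegree_X_sub_C, hdeg] at this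
    omega
  have hqroots : ∀ w : ℂ, (q.map (algebraMap ℝ ℂ)).IsRoot w → w.im = 0 := by
    intro w hw
    apply h w
    have hmm : p.map (algebraMap ℝ ℂ) = ((X - C z.re).map (algebraMap ℝ ℂ)) * (q.map (algebraMap ℝ ℂ)) := by
      rw [← Polynomial.map_mul, hfac]
    rw [IsRoot, hmm, eval_mul, hw.eq_zero, mul_zero]
  have hqsplits : q.Splits := ih (n - 1) (by omega) q hqdeg hqroots
  rw [← hfac]
  exact (Splits.X_sub_C _).mul hqsplits

lemma conj_isRoot (p : Polynomial ℝ) {z : ℂ} (hz : (p.map (algebraMap ℝ ℂ)).IsRoot z) :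
    (p.map (algebraMap ℝ ℂ)).IsRoot ((starRingEnd ℂ) z) := by
  have h1 : ∀ w : ℂ, eval w (p.map (algebraMap ℝ ℂ)) = aeval w p := by
    intro w
    rw [eval_map, aeval_def]
  show eval _ _ = 0
  rw [h1, Polynomial.aeval_conj]
  rw [IsRoot, h1] at hz
  rw [hz, map_zero]

lemma key_im_le {x₀ : ℂ} (ht : 0 < x₀.im) {s : ℝ} (hs1 : -1 ≤ s) (hs0 : s ≤ 0) :
    ((x₀ ^ 2 + x₀) / ((s : ℂ) - x₀)).im ≤ -x₀.im := by
  have hd : ((s : ℂ) - x₀) ≠ 0 := by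
    intro h
    have h2 : ((s : ℂ) - x₀).im = 0 := by rw [h]; simp
    rw [Complex.sub_im, Complex.ofReal_im] at h2
    linarith
  have hN : 0 < Complex.normSq ((s : ℂ) - x₀) := Complex.normSq_pos.mpr hd
  rw [Complex.div_im]
  set a := x₀.re
  set b := x₀.im
  have hre : ((s : ℂ) - x₀).re = s - a := by simp [Complex.sub_re]; rfl
  have him : ((s : ℂ) - x₀).im = -b := by simp [Complex.sub_im]; rfl
  have hzre : (x₀ ^ 2 + x₀).re = a ^ 2 - b ^ 2 + a := by
    simp [pow_two, Complex.add_re, Complex.mul_re]; rfl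
  have hzim : (x₀ ^ 2 + x₀).im = 2 * a * b + b := by
    simp [pow_two, Complex.add_im, Complex.mul_im]; ring
  rw [hre, him, hzre, hzim, div_sub_div_same, div_le_iff₀ hN]
  have hNval : Complex.normSq ((s : ℂ) - x₀) = (s - a) ^ 2 + b ^ 2 := by
    rw [Complex.normSq_apply, hre, him]; ring
  rw [hNval]
  have h2 : 0 ≤ (-s) * (s + 1) := mul_nonneg (by linarith) (by linarith)
  have h3 : s ^ 2 + s ≤ 0 := by nlinarith [h2]
  have hkey : b * (s ^ 2 + s) ≤ 0 := mul_nonpos_iff.mpr (Or.inl ⟨ht.le, h3⟩)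
  have hid : (2 * a * b + b) * (s - a) - (a ^ 2 - b ^ 2 + a) * (-b)
      = -b * ((s - a) ^ 2 + b ^ 2) + b * (s ^ 2 + s) := by ring
  rw [hid]
  linarith
lemma diamond_no_root_upper (f g : Polynomial ℝ) (hf0 : f ≠ 0)
    (hfreal : f.roots.card = f.natDegree) (hg0 : g ≠ 0)
    (hgreal : g.roots.card = g.natDegree)
    (hgroots : ∀ x ∈ g.roots, x ∈ Set.Icc (-1 : ℝ) 0)
    {x₀ : ℂ} (ht : 0 < x₀.im) :
    eval x₀ ((diamondProd f g).map (algebraMap ℝ ℂ)) ≠ 0 := by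
  set F := f.map (algebraMap ℝ ℂ) with hF
  set G := g.map (algebraMap ℝ ℂ) with hG
  have hF0 : F ≠ 0 := Polynomial.map_ne_zero hf0
  have hG0 : G ≠ 0 := Polynomial.map_ne_zero hg0
  set m := f.natDegree with hm
  set n := g.natDegree with hn
  have hFdeg : F.natDegree = m := natDegree_map _
  have hGdeg : G.natDegree = n := natDegree_map _
  have hFroots : f.roots.map (algebraMap ℝ ℂ) = F.roots :=
    roots_map_of_map_ne_zero_of_card_eq_natDegree _ hF0 hfreal
  have hGroots : g.roots.map (algebraMap ℝ ℂ) = G.roots :=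
    roots_map_of_map_ne_zero_of_card_eq_natDegree _ hG0 hgreal
  have hx0 : x₀ ≠ 0 := fun h => by rw [h] at ht; simp at ht
  have hx1 : x₀ + 1 ≠ 0 := fun h => by
    have h2 : (x₀ + 1).im = 0 := by rw [h]; simp
    simp [Complex.add_im] at h2
    rw [h2] at ht; exact lt_irrefl _ ht
  set t := x₀.im with htdef
  set w₀ := x₀ ^ 2 + x₀ with hw
  have hwfac : w₀ = x₀ * (x₀ + 1) := by rw [hw]; ring
  have hw0 : w₀ ≠ 0 := by rw [hwfac]; exact mul_ne_zero hx0 hx1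
  set Qf := taylor x₀ F with hQf
  set Qg := ∑ k ∈ Finset.range (n + 1),
    C (w₀ ^ k * (taylor x₀ G).coeff k) * X ^ (n - k) with hQg
  -- coefficients of Qg
  have hcoeffQg : ∀ j, j ≤ n → Qg.coeff j = w₀ ^ (n - j) * (taylor x₀ G).coeff (n - j) := by
    intro j hj
    rw [hQg, finset_sum_coeff, Finset.sum_eq_single (n - j)]
    · rw [coeff_C_mul, coeff_X_pow, if_pos (by omega), mul_one]
    · intro k hk hkj
      rw [coeff_C_mul, coeff_X_pow, if_neg (by simp only [Finset.mem_range] at hk; omega), mul_zero]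
    · intro hmem
      exact absurd (Finset.mem_range.mpr (by omega)) hmem
  -- basic facts about G at x₀
  have hGx0 : eval x₀ G ≠ 0 := by
    intro h0
    have hmem : x₀ ∈ G.roots := mem_roots'.mpr ⟨hG0, h0⟩
    rw [← hGroots] at hmem
    obtain ⟨r, _, hr⟩ := Multiset.mem_map.mp hmem
    have : x₀.im = 0 := by rw [← hr]; simp
    rw [htdef, this] at ht; exact lt_irrefl _ ht
  have htaylorG_deg : (taylor x₀ G).natDegree = n := by rw [natDegree_taylor, hGdeg]
  have htaylorG_lc : (taylor x₀ G).coeff n = G.leadingCoeff := by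
    rw [← htaylorG_deg, coeff_natDegree, taylor_apply,
      leadingCoeff_comp (by rw [natDegree_X_add_C]; omega)]
    simp [leadingCoeff_X_add_C]
  have hlcG : G.leadingCoeff ≠ 0 := leadingCoeff_ne_zero.mpr hG0
  -- degree and nonvanishing of Qg
  have hQgdegle : Qg.natDegree ≤ n := by
    rw [hQg]
    apply natDegree_sum_le_of_forall_le
    intro k hk
    exact (natDegree_C_mul_le _ _).trans (by rw [natDegree_X_pow]; omega)
  have hQgcoeffn : Qg.coeff n = eval x₀ G := by
    rw [hcoeffQg n le_rfl]
    simp [taylor_coeff_zero]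
  have hQgdeg : Qg.natDegree = n :=
    le_antisymm hQgdegle (le_natDegree_of_ne_zero (by rw [hQgcoeffn]; exact hGx0))
  have hQg0 : Qg ≠ 0 := fun h => hGx0 (by rw [← hQgcoeffn, h, coeff_zero])
  -- root localization for Qg
  have hQgroots : ∀ z : ℂ, Qg.IsRoot z → z.im ≤ -t := by
    intro z hz
    have hcoeff0 : Qg.coeff 0 = w₀ ^ n * G.leadingCoeff := by
      rw [hcoeffQg 0 (by omega), Nat.sub_zero, htaylorG_lc]
    have hz0 : z ≠ 0 := by
      intro h0
      rw [IsRoot, h0, ← coeff_zero_eq_eval_zero, hcoeff0] at hz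
      exact (mul_ne_zero (pow_ne_zero _ hw0) hlcG) hz
    have hkey : eval z Qg = z ^ n * eval (w₀ / z) (taylor x₀ G) := by
      rw [hQg, eval_finset_sum]
      rw [eval_eq_sum_range, htaylorG_deg, Finset.mul_sum]
      apply Finset.sum_congr rfl
      intro k hk
      rw [Finset.mem_range] at hk
      rw [eval_mul, eval_C, eval_pow, eval_X]
      rw [div_pow]
      have hzk : z ^ n = z ^ (n - k) * z ^ k := by rw [← pow_add]; congr 1; omega
      rw [hzk]
      field_simp
    have htay0 : eval (w₀ / z) (taylor x₀ G) = 0 := by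
      rw [IsRoot, hkey] at hz
      exact (mul_eq_zero.mp hz).resolve_left (pow_ne_zero _ hz0)
    have hGroot : eval (w₀ / z + x₀) G = 0 := by
      rw [taylor_apply, eval_comp] at htay0
      simpa using htay0
    have hmem : (w₀ / z + x₀) ∈ G.roots := mem_roots'.mpr ⟨hG0, hGroot⟩
    rw [← hGroots] at hmem
    obtain ⟨s, hsmem, hs⟩ := Multiset.mem_map.mp hmem
    obtain ⟨hs1, hs0'⟩ := hgroots s hsmem
    have hscoe : ((s : ℝ) : ℂ) = w₀ / z + x₀ := by rw [← hs]; simp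
    have hsx : ((s : ℝ) : ℂ) - x₀ ≠ 0 := by
      intro h0
      have h2 : (((s : ℝ) : ℂ) - x₀).im = 0 := by rw [h0]; simp
      rw [Complex.sub_im, Complex.ofReal_im] at h2
      have : x₀.im = 0 := by linarith
      rw [htdef, this] at ht; exact lt_irrefl _ ht
    have h1 : w₀ / z = ((s : ℝ) : ℂ) - x₀ := by rw [hscoe]; ring
    have hw' : w₀ = (((s : ℝ) : ℂ) - x₀) * z := (div_eq_iff hz0).mp h1
    have hzval : z = w₀ / (((s : ℝ) : ℂ) - x₀) := by
      rw [hw', mul_comm, mul_div_assoc, div_self hsx, mul_one]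
    rw [hzval, hw]
    exact key_im_le ht hs1 hs0'
  -- Qf facts
  have hQflc : Qf.leadingCoeff = F.leadingCoeff := by
    rw [hQf, taylor_apply, leadingCoeff_comp (by rw [natDegree_X_add_C]; omega)]
    simp [leadingCoeff_X_add_C]
  have hQf0 : Qf ≠ 0 := by
    intro h0
    apply hF0
    rw [← leadingCoeff_eq_zero, ← hQflc, h0, leadingCoeff_zero]
  have hQfdeg : Qf.natDegree = m := by rw [hQf, natDegree_taylor, hFdeg]
  have hQfroots : ∀ z : ℂ, Qf.IsRoot z → z.im ≤ -t := by
    intro z hz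
    have hFroot : eval (z + x₀) F = 0 := by
      rw [hQf, IsRoot, taylor_apply, eval_comp] at hz
      simpa using hz
    have hmem : (z + x₀) ∈ F.roots := mem_roots'.mpr ⟨hF0, hFroot⟩
    rw [← hFroots] at hmem
    obtain ⟨r, _, hr⟩ := Multiset.mem_map.mp hmem
    have him : (z + x₀).im = 0 := by rw [← hr]; simp
    rw [Complex.add_im] at him
    rw [htdef]
    linarith
  -- the product polynomial
  set P := Qf * Qg with hP
  have hP0 : P ≠ 0 := mul_ne_zero hQf0 hQg0
  have hPdeg : P.natDegree = m + n := by rw [hP, natDegree_mul hQf0 hQg0, hQfdeg, hQgdeg]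
  have hProots : ∀ z : ℂ, P.IsRoot z → z.im ≤ -t := by
    intro z hz
    rw [IsRoot, hP, eval_mul] at hz
    rcases mul_eq_zero.mp hz with h | h
    · exact hQfroots z h
    · exact hQgroots z h
  have hDn0 : derivative^[n] P ≠ 0 := by
    intro h0
    have hc := coeff_iterate_derivative P (k := n) m
    rw [h0, coeff_zero] at hc
    have hlcP : P.coeff (m + n) ≠ 0 := by
      rw [← hPdeg, coeff_natDegree]
      exact leadingCoeff_ne_zero.mpr hP0
    have hdf : ((m + n).descFactorial n : ℂ) ≠ 0 := by
      rw [Nat.cast_ne_zero]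
      intro h
      rw [Nat.descFactorial_eq_zero_iff_lt] at h
      omega
    rw [nsmul_eq_mul] at hc
    exact (mul_ne_zero hdf hlcP) hc.symm
  have hno0 : eval 0 (derivative^[n] P) ≠ 0 := by
    have hgl := iterate_gauss_lucas hProots n hDn0 0 (by simp; rw [htdef] at ht ⊢; linarith)
    exact hgl
  -- auxiliary coefficient formulas
  have hD0 : ∀ (q : Polynomial ℂ) (j : ℕ), (derivative^[j] q).coeff 0 = (Nat.factorial j : ℂ) * q.coeff j := by
    intro q j
    rw [coeff_iterate_derivative, zero_add, Nat.descFactorial_self, nsmul_eq_mul]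
  have hDF : ∀ (q : Polynomial ℂ) (k : ℕ),
      eval x₀ (derivative^[k] q) = (Nat.factorial k : ℂ) * (taylor x₀ q).coeff k := by
    intro q k
    rw [taylor_coeff]
    have h1 : derivative^[k] q = Nat.factorial k • hasseDeriv k q := by
      rw [← factorial_smul_hasseDeriv k]
      rfl
    rw [h1, eval_smul, nsmul_eq_mul]
  -- the key identity
  have hiden : eval 0 (derivative^[n] P) =
      (Nat.factorial n : ℂ) * eval x₀ ((diamondProd f g).map (algebraMap ℝ ℂ)) := by
    have hRHS : eval x₀ ((diamondProd f g).map (algebraMap ℝ ℂ))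
        = ∑ k ∈ Finset.range (m + n + 1),
            (taylor x₀ F).coeff k * (taylor x₀ G).coeff k * w₀ ^ k := by
      rw [diamondProd, Polynomial.map_sum, eval_finset_sum]
      apply Finset.sum_congr rfl
      intro k hk
      have hfact : ((Nat.factorial k : ℝ) : ℂ) ≠ 0 := by
        rw [Complex.ofReal_ne_zero, Nat.cast_ne_zero]
        exact Nat.factorial_ne_zero k
      simp only [Polynomial.map_mul, map_C, Polynomial.map_pow, Polynomial.map_add,
        Polynomial.map_one, Polynomial.map_X, eval_mul, eval_C, eval_pow, eval_add,
        eval_X, eval_one, ← iterate_derivative_map]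
      rw [hDF (f.map (algebraMap ℝ ℂ)) k, hDF (g.map (algebraMap ℝ ℂ)) k]
      have halg : (algebraMap ℝ ℂ) ((Nat.factorial k : ℝ))⁻¹ = (((Nat.factorial k : ℝ) : ℂ))⁻¹ := by
        simp
      rw [halg]
      have hwk : x₀ ^ k * (x₀ + 1) ^ k = w₀ ^ k := by rw [hwfac, mul_pow]
      rw [hwk]
      have hcast : ((Nat.factorial k : ℝ) : ℂ) = ((Nat.factorial k : ℕ) : ℂ) := by push_cast; rfl
      rw [hcast]
      have hfact2 : ((Nat.factorial k : ℕ) : ℂ) ≠ 0 := by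
        rw [Nat.cast_ne_zero]; exact Nat.factorial_ne_zero k
      field_simp
      rw [← hF, ← hG]
    rw [hRHS]
    have hLHS : eval 0 (derivative^[n] P)
        = ∑ k ∈ Finset.range (n + 1), (n.choose k : ℂ) *
            (((Nat.factorial (n - k) : ℂ) * Qf.coeff (n - k)) * ((Nat.factorial k : ℂ) * Qg.coeff k)) := by
      rw [← coeff_zero_eq_eval_zero, hP, iterate_derivative_mul, finset_sum_coeff]
      apply Finset.sum_congr rfl
      intro k hk
      simp only [coeff_smul, mul_coeff_zero, hD0, smul_eq_mul, nsmul_eq_mul,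
        Polynomial.natCast_coeff_zero]
    rw [hLHS]
    have hterm : ∀ k ∈ Finset.range (n + 1),
        (n.choose k : ℂ) * (((Nat.factorial (n - k) : ℂ) * Qf.coeff (n - k)) * ((Nat.factorial k : ℂ) * Qg.coeff k))
        = (Nat.factorial n : ℂ) * ((taylor x₀ F).coeff (n - k) * (taylor x₀ G).coeff (n - k) * w₀ ^ (n - k)) := by
      intro k hk
      rw [Finset.mem_range] at hk
      rw [hcoeffQg k (by omega)]
      have hchoose : (n.choose k : ℂ) * (Nat.factorial (n - k) : ℂ) * (Nat.factorial k : ℂ) = (Nat.factorial n : ℂ) := by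
        rw [← Nat.cast_mul, ← Nat.cast_mul]
        congr 1
        rw [mul_right_comm]
        exact Nat.choose_mul_factorial_mul_factorial (by omega)
      calc (n.choose k : ℂ) * (((Nat.factorial (n - k) : ℂ) * Qf.coeff (n - k)) * ((Nat.factorial k : ℂ) * (w₀ ^ (n - k) * (taylor x₀ G).coeff (n - k))))
          = ((n.choose k : ℂ) * (Nat.factorial (n - k) : ℂ) * (Nat.factorial k : ℂ)) * (Qf.coeff (n - k) * (taylor x₀ G).coeff (n - k) * w₀ ^ (n - k)) := by ring
        _ = (Nat.factorial n : ℂ) * ((taylor x₀ F).coeff (n - k) * (taylor x₀ G).coeff (n - k) * w₀ ^ (n - k)) := by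
            rw [hchoose, hQf]
    rw [Finset.sum_congr rfl hterm]
    have hreflect : ∑ k ∈ Finset.range (n + 1),
        (Nat.factorial n : ℂ) * ((taylor x₀ F).coeff (n - k) * (taylor x₀ G).coeff (n - k) * w₀ ^ (n - k))
        = ∑ k ∈ Finset.range (n + 1),
        (Nat.factorial n : ℂ) * ((taylor x₀ F).coeff k * (taylor x₀ G).coeff k * w₀ ^ k) := by
      have := Finset.sum_range_reflect (fun j => (Nat.factorial n : ℂ) *
        ((taylor x₀ F).coeff j * (taylor x₀ G).coeff j * w₀ ^ j)) (n + 1)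
      simp only [Nat.add_sub_cancel] at this
      exact this
    rw [hreflect, ← Finset.mul_sum]
    congr 1
    apply Finset.sum_subset
    · intro k hk
      rw [Finset.mem_range] at hk ⊢
      omega
    · intro k _ hk2
      rw [Finset.mem_range] at hk2
      have hc0 : (taylor x₀ G).coeff k = 0 :=
        coeff_eq_zero_of_natDegree_lt (by rw [htaylorG_deg]; omega)
      rw [hc0]
      ring
  rw [hiden] at hno0
  intro hcontra
  rw [hcontra, mul_zero] at hno0
  exact hno0 rfl

end Aux

/-- Theorem: if `f` has only real zeros and `g` is nonzero with all its zeros in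
`[-1,0]`, then `f ⋄ g` has only real zeros (or is identically zero). -/
theorem stmt6 (f g : Polynomial ℝ) (hf : AllRootsReal f)
    (hg : g ≠ 0) (hgreal : AllRootsReal g)
    (hgroots : ∀ x ∈ g.roots, x ∈ Set.Icc (-1 : ℝ) 0) :
    AllRootsReal (diamondProd f g) := by
  by_cases hf0 : f = 0
  · subst hf0
    have hzero : diamondProd 0 g = 0 := by
      simp [diamondProd]
    rw [hzero]
    show (0 : Polynomial ℝ).roots.card = (0 : Polynomial ℝ).natDegree
    simp
  · have hsplits : (diamondProd f g).Splits := by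
      apply splits_of_roots_im_eq_zero (diamondProd f g).natDegree _ rfl
      intro z hz
      by_contra him
      rcases lt_or_gt_of_ne him with hlt | hgt
      · have hconj := conj_isRoot _ hz
        have hpos : (0 : ℝ) < ((starRingEnd ℂ) z).im := by
          simp only [Complex.conj_im]
          linarith
        exact diamond_no_root_upper f g hf0 hf hg hgreal hgroots hpos hconj
      · exact diamond_no_root_upper f g hf0 hf hg hgreal hgroots hgt hz
    exact splits_iff_card_roots.mp hsplits
end

section
/- Let n > 1 be an integer and q ∈ ℝ. The sequence Γ_q = {q+k}_{k≥0} is a multiplier n-sequence if and only if q ∉ (−n, 0). -/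
open Polynomial

/-- The transform `Σ aᵢ xⁱ ↦ Σ γᵢ aᵢ xⁱ`. -/
noncomputable def seqTransform (γ : ℕ → ℝ) (f : Polynomial ℝ) : Polynomial ℝ :=
  ∑ i ∈ Finset.range (f.natDegree + 1), C (γ i * f.coeff i) * X ^ i

/-- `γ` is a multiplier sequence: it maps every real-rooted polynomial to a polynomial
with only real zeros (or the zero polynomial). -/
def MultiplierSeq (γ : ℕ → ℝ) : Prop :=
  ∀ f : Polynomial ℝ, f ≠ 0 → AllRootsReal f → AllRootsReal (seqTransform γ f)

/-- `γ` is a multiplier `n`-sequence: it maps every real-rooted polynomial of degree at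
most `n` to a polynomial with only real zeros (or the zero polynomial). -/
def MultiplierNSeq (n : ℕ) (γ : ℕ → ℝ) : Prop :=
  ∀ f : Polynomial ℝ, f ≠ 0 → f.natDegree ≤ n → AllRootsReal f →
    AllRootsReal (seqTransform γ f)

private lemma eulerCoeff (q : ℝ) (f : ℝ[X]) (i : ℕ) :
    (C q * f + X * derivative f).coeff i = (q + i) * f.coeff i := by
  rcases i with _ | n
  · simp [mul_coeff_zero, coeff_X_zero]
  · rw [coeff_add, coeff_C_mul, coeff_X_mul, coeff_derivative]
    push_cast
    ring

private lemma seqTransform_eq (q : ℝ) (f : ℝ[X]) :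
    seqTransform (fun k => q + (k : ℝ)) f = C q * f + X * derivative f := by
  ext i
  rw [seqTransform, finset_sum_coeff, eulerCoeff]
  simp only [coeff_C_mul, coeff_X_pow, mul_ite, mul_one, mul_zero]
  rw [Finset.sum_ite_eq (Finset.range (f.natDegree + 1)) i fun k => (q + (k : ℝ)) * f.coeff k]
  by_cases h : i ∈ Finset.range (f.natDegree + 1)
  · rw [if_pos h]
  · rw [if_neg h]
    have hi : f.natDegree < i := by
      simp only [Finset.mem_range] at h; omega
    rw [coeff_eq_zero_of_natDegree_lt hi, mul_zero]

private lemma arr_zero : AllRootsReal 0 := by simp [AllRootsReal]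

private lemma arr_C (a : ℝ) : AllRootsReal (C a) := by
  simp [AllRootsReal]

private lemma arr_mul {p r : ℝ[X]} (hp : p ≠ 0) (hr : r ≠ 0) (h1 : AllRootsReal p)
    (h2 : AllRootsReal r) : AllRootsReal (p * r) := by
  unfold AllRootsReal at *
  rw [roots_mul (mul_ne_zero hp hr), natDegree_mul hp hr, Multiset.card_add, h1, h2]

private lemma arr_neg {p : ℝ[X]} (h : AllRootsReal p) : AllRootsReal (-p) := by
  rcases eq_or_ne p 0 with rfl | hp
  · simpa using h
  · unfold AllRootsReal at *
    rw [show -p = C (-1) * p by simp, roots_C_mul _ (by norm_num : (-1:ℝ) ≠ 0),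
      natDegree_C_mul (by norm_num : (-1:ℝ) ≠ 0), h]

private lemma cont_weight {q : ℝ} (hq : 0 ≤ q) (f : ℝ[X]) :
    Continuous fun x : ℝ => |x| ^ q * f.eval x := by
  refine Continuous.mul ?_ f.continuous
  rw [continuous_iff_continuousAt]
  intro x
  exact (Real.continuousAt_rpow_const _ _ (Or.inr hq)).comp continuous_abs.continuousAt

private lemma hasDerivAt_weight (q : ℝ) (f : ℝ[X]) {z : ℝ} (hz : z ≠ 0) :
    HasDerivAt (fun x : ℝ => |x| ^ q * f.eval x)
      (|z| ^ q / z * (q * f.eval z + z * (derivative f).eval z)) z := by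
  rcases hz.lt_or_gt with hneg | hpos
  · have h0 : HasDerivAt (fun x : ℝ => -x) (-1 : ℝ) z := (hasDerivAt_id z).neg
    have h1 : HasDerivAt (fun x : ℝ => (-x) ^ q) (q * (-z) ^ (q - 1) * (-1)) z :=
      (Real.hasDerivAt_rpow_const (Or.inl (by linarith : (-z : ℝ) ≠ 0))).comp z h0
    have h2 := h1.mul (f.hasDerivAt z)
    have heq : (fun x : ℝ => |x| ^ q * f.eval x) =ᶠ[nhds z] fun x => (-x) ^ q * f.eval x := by
      filter_upwards [Iio_mem_nhds hneg] with x hx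
      rw [abs_of_neg hx]
    have hval : |z| ^ q / z * (q * f.eval z + z * (derivative f).eval z)
        = q * (-z) ^ (q - 1) * (-1) * f.eval z + (-z) ^ q * (derivative f).eval z := by
      rw [abs_of_neg hneg, Real.rpow_sub (by linarith) q 1, Real.rpow_one]
      field_simp
    rw [hval]
    exact h2.congr_of_eventuallyEq heq
  · have h1 : HasDerivAt (fun x : ℝ => x ^ q) (q * z ^ (q - 1)) z :=
      Real.hasDerivAt_rpow_const (Or.inl hz)
    have h2 := h1.mul (f.hasDerivAt z)
    have heq : (fun x : ℝ => |x| ^ q * f.eval x) =ᶠ[nhds z] fun x => x ^ q * f.eval x := by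
      filter_upwards [Ioi_mem_nhds hpos] with x hx
      rw [abs_of_pos hx]
    have hval : |z| ^ q / z * (q * f.eval z + z * (derivative f).eval z)
        = q * z ^ (q - 1) * f.eval z + z ^ q * (derivative f).eval z := by
      rw [abs_of_pos hpos, Real.rpow_sub hpos q 1, Real.rpow_one]
      field_simp
    rw [hval]
    exact h2.congr_of_eventuallyEq heq

private lemma core {q : ℝ} (hq : 0 ≤ q) (f : ℝ[X]) (hf : f ≠ 0)
    (hR : AllRootsReal f) : AllRootsReal (C q * f + X * derivative f) := by
  rcases Nat.eq_zero_or_pos f.natDegree with hd0 | hdpos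
  · have hder : derivative f = 0 := derivative_of_natDegree_zero hd0
    rw [hder, mul_zero, add_zero]
    rw [show f = C (f.coeff 0) from eq_C_of_natDegree_eq_zero hd0, ← C_mul]
    exact arr_C _
  rcases eq_or_lt_of_le hq with hq0 | hqpos
  · rw [← hq0]
    simp only [map_zero, zero_mul, zero_add]
    have hf' : derivative f ≠ 0 := fun h => by
      have := natDegree_eq_zero_of_derivative_eq_zero h
      omega
    have hdeg : (derivative f).natDegree = f.natDegree - 1 :=
      natDegree_eq_of_degree_eq_some (degree_derivative_eq f hdpos)
    have h1 := f.card_roots_le_derivative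
    have h2 := (derivative f).card_roots'
    unfold AllRootsReal at hR ⊢
    rw [roots_mul (mul_ne_zero X_ne_zero hf'), roots_X, natDegree_mul X_ne_zero hf',
      natDegree_X, Multiset.card_add, Multiset.card_singleton]
    omega
  classical
  set g : ℝ[X] := C q * f + X * derivative f with hg_def
  have hcoeff : ∀ i, g.coeff i = (q + i) * f.coeff i := eulerCoeff q f
  have hgle : g.natDegree ≤ f.natDegree := natDegree_le_iff_coeff_eq_zero.mpr fun N hN => by
    rw [hcoeff, coeff_eq_zero_of_natDegree_lt hN, mul_zero]
  have hgcoeff : g.coeff f.natDegree ≠ 0 := by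
    rw [hcoeff]
    exact mul_ne_zero (by positivity) (leadingCoeff_ne_zero.mpr hf)
  have hg0 : g ≠ 0 := fun h => hgcoeff (by rw [h, coeff_zero])
  have hgd : g.natDegree = f.natDegree := le_antisymm hgle (le_natDegree_of_ne_zero hgcoeff)
  -- multiplicity bounds
  have hmul0 : f.rootMultiplicity 0 ≤ g.rootMultiplicity 0 := by
    rw [le_rootMultiplicity_iff hg0, show (X - C (0:ℝ)) = X by simp]
    have h1 : (X : ℝ[X]) ^ rootMultiplicity 0 f ∣ f := by
      simpa using pow_rootMultiplicity_dvd f 0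
    rw [X_pow_dvd_iff] at h1 ⊢
    intro i hi
    rw [hcoeff, h1 i hi, mul_zero]
  have hmulx : ∀ x : ℝ, f.rootMultiplicity x ≤ g.rootMultiplicity x + 1 := by
    intro x
    have h1 : (X - C x) ^ (f.rootMultiplicity x - 1) ∣ f :=
      dvd_trans (pow_dvd_pow _ (Nat.sub_le _ _)) (pow_rootMultiplicity_dvd f x)
    have h2 : (X - C x) ^ (f.rootMultiplicity x - 1) ∣ derivative f :=
      dvd_trans (pow_dvd_pow _ (rootMultiplicity_sub_one_le_derivative_rootMultiplicity f x))
        (pow_rootMultiplicity_dvd _ x)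
    have h3 : (X - C x) ^ (f.rootMultiplicity x - 1) ∣ g :=
      dvd_add (h1.mul_left _) (h2.mul_left _)
    have h4 := (le_rootMultiplicity_iff hg0).mpr h3
    omega
  -- interleaving roots via Rolle
  set Z : Finset ℝ := insert 0 f.roots.toFinset with hZ
  have hzero_mem : (0 : ℝ) ∈ Z := Finset.mem_insert_self 0 _
  have hroot0 : ∀ x ∈ Z, |x| ^ q * f.eval x = 0 := by
    intro x hx
    rcases Finset.mem_insert.mp hx with rfl | hx
    · rw [abs_zero, Real.zero_rpow hqpos.ne', zero_mul]
    · rw [(isRoot_of_mem_roots (Multiset.mem_toFinset.mp hx)).eq_zero, mul_zero]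
  have hevalg : ∀ c : ℝ, g.eval c = q * f.eval c + c * (derivative f).eval c := by
    intro c
    rw [hg_def]
    simp
  have hinter : Z.card ≤ (g.roots.toFinset \ Z).card + 1 := by
    refine Finset.card_le_diff_of_interleaved fun x hx y hy hxy hxy' => ?_
    obtain ⟨c, hc, hc0⟩ := exists_hasDerivAt_eq_zero
      (f' := fun z => |z| ^ q / z * (q * f.eval z + z * (derivative f).eval z)) hxy
      (cont_weight hq f).continuousOn
      ((hroot0 x hx).trans (hroot0 y hy).symm)
      (fun z hz => hasDerivAt_weight q f
        (fun h0 => hxy' 0 hzero_mem (h0 ▸ hz)))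
    have hcne : c ≠ 0 := fun h0 => hxy' 0 hzero_mem (h0 ▸ hc)
    have habs : |c| ^ q / c ≠ 0 :=
      div_ne_zero (Real.rpow_pos_of_pos (abs_pos.mpr hcne) q).ne' hcne
    have hgc : g.eval c = 0 := by
      rcases mul_eq_zero.mp hc0 with h | h
      · exact absurd h habs
      · rw [hevalg]; exact h
    exact ⟨c, Multiset.mem_toFinset.mpr ((mem_roots hg0).mpr hgc), hc.1, hc.2⟩
  -- counting
  have hcount_f : ∑ x ∈ Z, f.roots.count x = f.natDegree := by
    have h1 : ∑ x ∈ f.roots.toFinset, f.roots.count x = ∑ x ∈ Z, f.roots.count x :=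
      Finset.sum_subset (Finset.subset_insert 0 _) fun x _ hx =>
        Multiset.count_eq_zero.mpr fun hm => hx (Multiset.mem_toFinset.mpr hm)
    rw [← h1, Multiset.toFinset_sum_count_eq]
    exact hR
  have hsum_split : ∀ M : Multiset ℝ,
      ∑ x ∈ Z, M.count x = M.count 0 + ∑ x ∈ Z.erase 0, M.count x := by
    intro M
    conv_lhs => rw [← Finset.insert_erase hzero_mem]
    rw [Finset.sum_insert (Finset.notMem_erase 0 Z)]
  have hsplitZ : f.natDegree ≤ ∑ x ∈ Z, g.roots.count x + (Z.erase 0).card := by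
    calc f.natDegree = ∑ x ∈ Z, f.roots.count x := hcount_f.symm
      _ = f.roots.count 0 + ∑ x ∈ Z.erase 0, f.roots.count x := hsum_split f.roots
      _ ≤ g.roots.count 0 + ∑ x ∈ Z.erase 0, (g.roots.count x + 1) := by
          refine add_le_add ?_ (Finset.sum_le_sum fun x _ => ?_)
          · rw [count_roots, count_roots]; exact hmul0
          · rw [count_roots, count_roots]; exact hmulx x
      _ = (g.roots.count 0 + ∑ x ∈ Z.erase 0, g.roots.count x) + (Z.erase 0).card := by
          rw [Finset.sum_add_distrib, Finset.card_eq_sum_ones]; ring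
      _ = ∑ x ∈ Z, g.roots.count x + (Z.erase 0).card := by
          rw [hsum_split g.roots]
  have hTZ : (Z.erase 0).card ≤ ∑ x ∈ g.roots.toFinset \ Z, g.roots.count x := by
    have h1 : (Z.erase 0).card + 1 = Z.card := Finset.card_erase_add_one hzero_mem
    have h2 : (g.roots.toFinset \ Z).card ≤ ∑ x ∈ g.roots.toFinset \ Z, g.roots.count x := by
      rw [Finset.card_eq_sum_ones]
      refine Finset.sum_le_sum fun x hx => ?_
      exact Multiset.one_le_count_iff_mem.mpr (Multiset.mem_toFinset.mp (Finset.mem_sdiff.mp hx).1)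
    omega
  have h3 : ∑ x ∈ Z, g.roots.count x + ∑ x ∈ g.roots.toFinset \ Z, g.roots.count x
      = ∑ x ∈ Z ∪ g.roots.toFinset, g.roots.count x := by
    rw [← Finset.sum_union Finset.disjoint_sdiff, Finset.union_sdiff_self_eq_union]
  have h4 : ∑ x ∈ Z ∪ g.roots.toFinset, g.roots.count x = Multiset.card g.roots := by
    rw [← Multiset.toFinset_sum_count_eq g.roots]
    exact (Finset.sum_subset Finset.subset_union_right fun x _ hx =>
      Multiset.count_eq_zero.mpr fun hm => hx (Multiset.mem_toFinset.mpr hm)).symm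
  have hle := g.card_roots'
  unfold AllRootsReal
  omega

private lemma reflect_reflect' (d : ℕ) (f : ℝ[X]) : reflect d (reflect d f) = f := by
  ext i
  rw [coeff_reflect, coeff_reflect, revAt_invol]

private lemma reflect_one_X_sub_C (r : ℝ) : reflect 1 (X - C r) = 1 - C r * X := by
  have h : (X : ℝ[X]) - C r = C 1 * X ^ 1 + C (-r) * X ^ 0 := by
    simp [C_neg]
    ring
  rw [h, reflect_add, reflect_C_mul_X_pow, reflect_C_mul_X_pow,
    revAt_le (by norm_num : (1:ℕ) ≤ 1), revAt_le (Nat.zero_le 1)]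
  simp [C_neg]
  ring

private lemma reflect_explicit (a : ℝ) (M : Multiset ℝ) (k : ℕ) :
    reflect (Multiset.card M + k) (C a * (M.map fun r => X - C r).prod)
      = C a * X ^ k * (M.map fun r => 1 - C r * X).prod := by
  induction M using Multiset.induction_on generalizing k with
  | empty =>
    simp only [Multiset.map_zero, Multiset.prod_zero, Multiset.card_zero, zero_add, mul_one]
    conv_lhs => rw [show (C a : ℝ[X]) = C a * X ^ 0 by rw [pow_zero, mul_one]]
    rw [reflect_C_mul_X_pow, revAt_le (Nat.zero_le k), Nat.sub_zero]
  | cons r M ih =>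
    have hdeg : (C a * (M.map fun r => X - C r).prod).natDegree ≤ Multiset.card M + k := by
      refine le_trans natDegree_mul_le ?_
      rw [natDegree_C, natDegree_multiset_prod_X_sub_C_eq_card]
      omega
    have h1 : (((r ::ₘ M).map fun r => X - C r).prod) =
        (X - C r) * (M.map fun r => X - C r).prod := by
      rw [Multiset.map_cons, Multiset.prod_cons]
    have h2 : C a * ((X - C r) * (M.map fun r => X - C r).prod)
        = (X - C r) * (C a * (M.map fun r => X - C r).prod) := by ring
    rw [Multiset.card_cons, h1, h2,
      show Multiset.card M + 1 + k = 1 + (Multiset.card M + k) by omega,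
      reflect_mul _ _ (natDegree_X_sub_C r).le hdeg, reflect_one_X_sub_C, ih,
      Multiset.map_cons, Multiset.prod_cons]
    ring

private lemma one_sub_ne (r : ℝ) : (1 - C r * X : ℝ[X]) ≠ 0 := fun h => by
  have h0 := congrArg (fun p : ℝ[X] => p.coeff 0) h
  simp at h0

private lemma arr_one_sub (r : ℝ) : AllRootsReal (1 - C r * X) := by
  rcases eq_or_ne r 0 with rfl | hr
  · simp [AllRootsReal]
  · have hid : (1 - C r * X : ℝ[X]) = C (-r) * (X - C r⁻¹) := by
      rw [mul_sub, ← C_mul]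
      have : -r * r⁻¹ = -1 := by field_simp
      rw [this]
      simp [C_neg]
      ring
    unfold AllRootsReal
    rw [hid, roots_C_mul _ (neg_ne_zero.mpr hr), roots_X_sub_C,
      natDegree_C_mul (neg_ne_zero.mpr hr), natDegree_X_sub_C]
    simp

private lemma arr_multiset_prod (s : Multiset (ℝ[X])) (h : ∀ p ∈ s, p ≠ 0 ∧ AllRootsReal p) :
    AllRootsReal s.prod := by
  have h0 : (0 : ℝ[X]) ∉ s := fun hs => (h 0 hs).1 rfl
  unfold AllRootsReal
  rw [roots_multiset_prod _ h0, natDegree_multiset_prod _ h0, Multiset.card_bind]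
  exact congrArg Multiset.sum (Multiset.map_congr rfl fun p hp => (h p hp).2)

private lemma arr_reflect {f : ℝ[X]} (hf : f ≠ 0) {d : ℕ} (hd : f.natDegree ≤ d)
    (h : AllRootsReal f) : AllRootsReal (reflect d f) := by
  have hlc : f.leadingCoeff ≠ 0 := leadingCoeff_ne_zero.mpr hf
  have hcard : Multiset.card f.roots = f.natDegree := h
  have hfact := C_leadingCoeff_mul_prod_multiset_X_sub_C (p := f) hcard
  rw [← hfact]
  have hd' : d = Multiset.card f.roots + (d - f.natDegree) := by omega
  rw [hd', reflect_explicit]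
  apply arr_mul
  · exact mul_ne_zero (C_ne_zero.mpr hlc) (pow_ne_zero _ X_ne_zero)
  · exact Multiset.prod_ne_zero fun hm => by
      obtain ⟨r, _, hr⟩ := Multiset.mem_map.mp hm
      exact one_sub_ne r hr
  · unfold AllRootsReal
    rw [roots_C_mul _ hlc, roots_X_pow, natDegree_C_mul hlc, natDegree_X_pow]
    simp
  · refine arr_multiset_prod _ fun p hp => ?_
    obtain ⟨r, _, hr⟩ := Multiset.mem_map.mp hp
    exact hr ▸ ⟨one_sub_ne r, arr_one_sub r⟩


private lemma reflect_euler {f : ℝ[X]} {d : ℕ} (hd : f.natDegree ≤ d) (q : ℝ) :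
    reflect d (C q * f + X * derivative f)
      = -(C (-q - d) * reflect d f + X * derivative (reflect d f)) := by
  ext i
  rw [coeff_reflect, eulerCoeff, coeff_neg, eulerCoeff, coeff_reflect]
  rcases le_or_gt i d with hi | hi
  · rw [revAt_le hi]
    rw [show ((d - i : ℕ) : ℝ) = (d : ℝ) - i from by push_cast [hi]; ring]
    ring
  · rw [revAt_eq_self_of_lt hi, coeff_eq_zero_of_natDegree_lt (lt_of_le_of_lt hd hi)]
    ring

private lemma euler_natDegree_le (q : ℝ) (f : ℝ[X]) :
    (C q * f + X * derivative f).natDegree ≤ f.natDegree :=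
  natDegree_le_iff_coeff_eq_zero.mpr fun N hN => by
    rw [eulerCoeff, coeff_eq_zero_of_natDegree_lt hN, mul_zero]

private lemma backward {n : ℕ} {q : ℝ} (hq : q ≤ -(n : ℝ) ∨ 0 ≤ q) :
    MultiplierNSeq n (fun k => q + (k : ℝ)) := by
  intro f hf hdeg hroots
  rw [seqTransform_eq]
  rcases hq with hq | hq
  · by_cases hg : C q * f + X * derivative f = 0
    · rw [hg]; exact arr_zero
    have hdn : (f.natDegree : ℝ) ≤ n := by exact_mod_cast hdeg
    have hc : (0 : ℝ) ≤ -q - f.natDegree := by linarith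
    have hrne : reflect f.natDegree f ≠ 0 := fun h0 => hf (by
      rw [← reflect_reflect' f.natDegree f, h0, reflect_zero])
    have h1 : AllRootsReal (C (-q - f.natDegree) * reflect f.natDegree f
        + X * derivative (reflect f.natDegree f)) :=
      core hc _ hrne (arr_reflect hf le_rfl hroots)
    have h2 : AllRootsReal (reflect f.natDegree (C q * f + X * derivative f)) := by
      rw [reflect_euler le_rfl q]
      exact arr_neg h1
    have hne2 : reflect f.natDegree (C q * f + X * derivative f) ≠ 0 := fun h0 => hg (by
      rw [← reflect_reflect' f.natDegree (C q * f + X * derivative f), h0, reflect_zero])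
    have hdeg2 : (reflect f.natDegree (C q * f + X * derivative f)).natDegree ≤ f.natDegree :=
      natDegree_le_iff_coeff_eq_zero.mpr fun N hN => by
        rw [coeff_reflect, revAt_eq_self_of_lt hN,
          coeff_eq_zero_of_natDegree_lt (lt_of_le_of_lt (euler_natDegree_le q f) hN)]
    have h3 := arr_reflect hne2 hdeg2 h2
    rwa [reflect_reflect'] at h3
  · exact core hq f hf hroots

private lemma forward {n : ℕ} (hn : 1 < n) {q : ℝ} (hq : -(n : ℝ) < q) (hq0 : q < 0) :
    ¬ MultiplierNSeq n (fun k => q + (k : ℝ)) := by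
  obtain ⟨m, hm2, hml, hmh⟩ : ∃ m : ℕ, m + 2 ≤ n ∧ q + m < 0 ∧ 0 < q + m + 2 := by
    have hqpos : (0 : ℝ) < -q := by linarith
    rcases le_or_gt (⌈-q⌉₊ - 1) (n - 2) with h | h
    · have h2 : 1 ≤ ⌈-q⌉₊ := Nat.one_le_ceil_iff.mpr hqpos
      have h3 : ((⌈-q⌉₊ - 1 : ℕ) : ℝ) = (⌈-q⌉₊ : ℝ) - 1 := by
        push_cast [h2]; ring
      have h1 : (⌈-q⌉₊ : ℝ) < -q + 1 := Nat.ceil_lt_add_one hqpos.le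
      have h4 : -q ≤ (⌈-q⌉₊ : ℝ) := Nat.le_ceil _
      exact ⟨⌈-q⌉₊ - 1, by omega, by rw [h3]; linarith, by rw [h3]; linarith⟩
    · have h5 : n - 1 < ⌈-q⌉₊ := by omega
      have h6 : ((n - 1 : ℕ) : ℝ) < -q := Nat.lt_ceil.mp h5
      have h7 : ((n - 2 : ℕ) : ℝ) = (n : ℝ) - 2 := by
        push_cast [show 2 ≤ n from hn]; ring
      have h8 : ((n - 1 : ℕ) : ℝ) = (n : ℝ) - 1 := by
        push_cast [show 1 ≤ n from hn.le]; ring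
      refine ⟨n - 2, by omega, ?_, ?_⟩
      · rw [h7]; rw [h8] at h6; linarith
      · rw [h7]; linarith
  intro H
  set f : ℝ[X] := X ^ (m + 2) - X ^ m with hfdef
  have hcoeff : ∀ i, f.coeff i =
      (if i = m + 2 then 1 else 0) - (if i = m then 1 else 0) := by
    intro i
    rw [hfdef, coeff_sub, coeff_X_pow, coeff_X_pow]
  have hfne : f ≠ 0 := fun h => by
    have h0 := hcoeff (m + 2)
    rw [h, coeff_zero] at h0
    simp [show ¬ (m + 2 = m) by omega] at h0
  have hfd : f.natDegree = m + 2 := by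
    have h1 : f.natDegree ≤ m + 2 := by
      refine le_trans (natDegree_sub_le _ _) ?_
      simp [natDegree_X_pow]
    have h2 : m + 2 ≤ f.natDegree := le_natDegree_of_ne_zero (by
      rw [hcoeff]
      simp [show ¬ (m + 2 = m) by omega])
    omega
  have hfactor : f = X ^ m * (X - C 1) * (X - C (-1)) := by
    rw [hfdef]
    simp only [C_neg, C_1]
    ring
  have hroots : AllRootsReal f := by
    unfold AllRootsReal
    rw [hfactor, roots_mul (mul_ne_zero (mul_ne_zero (pow_ne_zero _ X_ne_zero)
        (X_sub_C_ne_zero 1)) (X_sub_C_ne_zero (-1))),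
      roots_mul (mul_ne_zero (pow_ne_zero _ X_ne_zero) (X_sub_C_ne_zero 1)),
      roots_X_pow, roots_X_sub_C, roots_X_sub_C,
      natDegree_mul (mul_ne_zero (pow_ne_zero _ X_ne_zero) (X_sub_C_ne_zero 1))
        (X_sub_C_ne_zero (-1)),
      natDegree_mul (pow_ne_zero _ X_ne_zero) (X_sub_C_ne_zero 1),
      natDegree_X_pow, natDegree_X_sub_C, natDegree_X_sub_C]
    simp
  have hP : ∀ x : ℝ, (C (q + m + 2) * X ^ 2 + C (-(q + m))).eval x > 0 := by
    intro x
    simp only [eval_add, eval_mul, eval_C, eval_pow, eval_X]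
    nlinarith [sq_nonneg x]
  have hPne : (C (q + m + 2) * X ^ 2 + C (-(q + m))) ≠ 0 := fun h => by
    have h0 := hP 0
    rw [h, eval_zero] at h0
    exact lt_irrefl 0 h0
  have hProots : (C (q + m + 2) * X ^ 2 + C (-(q + m))).roots = 0 := by
    apply Multiset.eq_zero_of_forall_notMem
    intro x hx
    exact (hP x).ne' ((mem_roots hPne).mp hx).eq_zero
  have hPc : (C (q + m + 2) * X ^ 2 + C (-(q + m))).coeff 2 = q + m + 2 := by
    rw [coeff_add, coeff_C_mul, coeff_X_pow]
    simp [coeff_C]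
  have hPdeg : (C (q + m + 2) * X ^ 2 + C (-(q + m))).natDegree = 2 := by
    have h1 : (C (q + m + 2) * X ^ 2 + C (-(q + m))).natDegree ≤ 2 := by
      refine le_trans (natDegree_add_le _ _) ?_
      refine max_le (le_trans (natDegree_C_mul_le _ _) (by rw [natDegree_X_pow])) ?_
      rw [natDegree_C]
      omega
    have h2 : 2 ≤ (C (q + m + 2) * X ^ 2 + C (-(q + m))).natDegree :=
      le_natDegree_of_ne_zero (by rw [hPc]; exact hmh.ne')
    omega
  have htrans : seqTransform (fun k => q + (k : ℝ)) f
      = X ^ m * (C (q + m + 2) * X ^ 2 + C (-(q + m))) := by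
    rw [seqTransform_eq]
    ext i
    rw [eulerCoeff]
    have hre : (X : ℝ[X]) ^ m * (C (q + m + 2) * X ^ 2 + C (-(q + m)))
        = C (q + m + 2) * X ^ (m + 2) + C (-(q + m)) * X ^ m := by ring
    rw [hre, coeff_add, coeff_C_mul, coeff_C_mul, coeff_X_pow, coeff_X_pow, hcoeff i]
    by_cases h1 : i = m + 2
    · subst h1
      simp only [if_pos rfl, if_neg (show ¬ (m + 2 = m) by omega)]
      push_cast
      ring
    · by_cases h2 : i = m
      · subst h2
        simp only [if_neg h1, if_pos rfl]
        push_cast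
        ring
      · simp [h1, h2]
  have hnot : ¬ AllRootsReal (seqTransform (fun k => q + (k : ℝ)) f) := by
    rw [htrans]
    unfold AllRootsReal
    rw [roots_mul (mul_ne_zero (pow_ne_zero _ X_ne_zero) hPne), roots_X_pow, hProots,
      natDegree_mul (pow_ne_zero _ X_ne_zero) hPne, natDegree_X_pow, hPdeg]
    simp
  exact hnot (H f hfne (by rw [hfd]; exact hm2) hroots)

/-- Corollary: for an integer `n > 1`, the sequence `Γ_q = {q+k}_{k ≥ 0}` is a
multiplier `n`-sequence if and only if `q ∉ (-n, 0)`. -/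
theorem stmt8 (n : ℕ) (hn : 1 < n) (q : ℝ) :
    MultiplierNSeq n (fun k => q + (k : ℝ)) ↔ q ∉ Set.Ioo (-(n : ℝ)) 0 := by
  constructor
  · intro H hmem
    exact forward hn hmem.1 hmem.2 H
  · intro h
    apply backward
    rcases le_or_gt q (-(n : ℝ)) with h1 | h1
    · exact Or.inl h1
    · rcases le_or_gt 0 q with h2 | h2
      · exact Or.inr h2
      · exact absurd ⟨h1, h2⟩ h
end

section
/- Let α ∈ [−1,0] and let f ∈ ℝ[x] be a polynomial such that 𝓔(f) is nonzero and has all its zeros in the interval [−1,0]. Then 𝓔((x−α)f) has all its zeros in [−1,0], and 𝓔(f) interlaces 𝓔((x−α)f). If in addition 𝓔(f) has only simple zeros, then so does 𝓔((x−α)f). -/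
open Polynomial

/-- The binomial polynomial `C(x, i) = x(x-1)⋯(x-i+1)/i!`. -/
noncomputable def binomPoly (i : ℕ) : Polynomial ℝ :=
  C ((i.factorial : ℝ))⁻¹ * ∏ j ∈ Finset.range i, (X - C (j : ℝ))

lemma binomPoly_mul_factorial (i : ℕ) :
    C ((i.factorial : ℝ)) * binomPoly i = ∏ j ∈ Finset.range i, (X - C (j : ℝ)) := by
  rw [binomPoly, ← mul_assoc, ← C_mul, mul_inv_cancel₀ (by exact_mod_cast i.factorial_ne_zero), C_1, one_mul]

lemma binomPoly_zero : binomPoly 0 = 1 := by simp [binomPoly]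

lemma X_mul_binomPoly (i : ℕ) :
    X * binomPoly i = ((i:ℝ)+1) • binomPoly (i+1) + (i : ℝ) • binomPoly i := by
  have h1 : ((i:ℝ)+1) • binomPoly (i+1) = (X - C (i:ℝ)) * binomPoly i := by
    rw [binomPoly, binomPoly, Finset.prod_range_succ, Nat.factorial_succ]
    push_cast
    rw [smul_eq_C_mul, ← mul_assoc, ← C_mul]
    have hc : ((i:ℝ)+1) * (((i:ℝ)+1)⁻¹ * ((i.factorial : ℝ))⁻¹) = ((i.factorial : ℝ))⁻¹ := by
      rw [← mul_assoc, mul_inv_cancel₀ (by positivity), one_mul]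
    rw [mul_inv, hc]
    ring
  rw [h1, smul_eq_C_mul]
  ring

lemma monic_fact_binom (i : ℕ) : (C ((i.factorial : ℝ)) * binomPoly i).Monic := by
  rw [binomPoly_mul_factorial]
  exact monic_prod_of_monic _ _ (fun j _ => monic_X_sub_C _)

lemma natdeg_fact_binom (i : ℕ) : (C ((i.factorial : ℝ)) * binomPoly i).natDegree = i := by
  rw [binomPoly_mul_factorial,
    natDegree_prod _ _ (fun j _ => X_sub_C_ne_zero _)]
  simp only [natDegree_X_sub_C, Finset.sum_const, smul_eq_mul, mul_one, Finset.card_range]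

lemma mem_binom_span : ∀ (n : ℕ) (p : Polynomial ℝ), p.natDegree ≤ n →
    p ∈ Submodule.span ℝ (Set.range binomPoly) := by
  intro n
  induction n with
  | zero =>
    intro p hp
    rw [Polynomial.eq_C_of_natDegree_le_zero hp]
    have : C (p.coeff 0) = p.coeff 0 • binomPoly 0 := by
      simp [binomPoly_zero, smul_eq_C_mul]
    rw [this]
    exact Submodule.smul_mem _ _ (Submodule.subset_span ⟨0, rfl⟩)
  | succ m ih =>
    intro p hp
    by_cases hdeg : p.natDegree ≤ m
    · exact ih p hdeg
    have hd : p.natDegree = m + 1 := le_antisymm hp (by omega)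
    have hp0 : p ≠ 0 := fun h => by simp [h] at hd
    have hlc0 : p.leadingCoeff ≠ 0 := leadingCoeff_ne_zero.mpr hp0
    set r := C p.leadingCoeff * (C (((m+1).factorial : ℝ)) * binomPoly (m+1)) with hr
    have hmon := monic_fact_binom (m+1)
    have hrdeg : r.degree = p.degree := by
      rw [hr, Polynomial.degree_C_mul hlc0,
        degree_eq_natDegree hp0, degree_eq_natDegree hmon.ne_zero, natdeg_fact_binom, hd]
    have hrlc : r.leadingCoeff = p.leadingCoeff := by
      rw [hr, Polynomial.leadingCoeff_mul, Polynomial.leadingCoeff_C,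
        hmon.leadingCoeff, mul_one]
    have hq : (p - r).natDegree < m + 1 := by
      by_cases hq0 : p - r = 0
      · simp [hq0]
      rw [Polynomial.natDegree_lt_iff_degree_lt hq0]
      have := Polynomial.degree_sub_lt hrdeg.symm hp0 hrlc.symm
      rw [degree_eq_natDegree hp0, hd] at this
      exact_mod_cast this
    have hmem : p - r ∈ Submodule.span ℝ (Set.range binomPoly) := ih _ (by omega)
    have : p = (p - r) + r := by ring
    rw [this]
    refine Submodule.add_mem _ hmem ?_
    rw [hr, ← smul_eq_C_mul, ← smul_eq_C_mul]
    exact Submodule.smul_mem _ _ (Submodule.smul_mem _ _ (Submodule.subset_span ⟨m+1, rfl⟩))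

lemma E_identity (E : Polynomial ℝ →ₗ[ℝ] Polynomial ℝ)
    (hE : ∀ i : ℕ, E (binomPoly i) = X ^ i) (α : ℝ) (f : Polynomial ℝ) :
    E ((X - C α) * f) = X * (X + 1) * derivative (E f) + (X - C α) * (E f) := by
  have hf : f ∈ Submodule.span ℝ (Set.range binomPoly) := mem_binom_span _ f le_rfl
  induction hf using Submodule.span_induction with
  | mem x hx =>
    obtain ⟨i, rfl⟩ := hx
    have expand : (X - C α) * binomPoly i
        = ((i:ℝ)+1) • binomPoly (i+1) + ((i:ℝ) - α) • binomPoly i := by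
      rw [sub_mul, X_mul_binomPoly]
      simp only [sub_smul, smul_eq_C_mul]
      ring
    rw [expand, map_add, map_smul, map_smul, hE, hE, derivative_X_pow]
    cases i with
    | zero => simp [smul_eq_C_mul]; ring
    | succ j =>
      simp only [Nat.cast_succ, Nat.add_sub_cancel, smul_eq_C_mul]
      push_cast
      simp only [map_add, map_sub, map_one]
      ring
  | zero => simp
  | add x y hx hy ihx ihy =>
    rw [mul_add, map_add, map_add, ihx, ihy, derivative_add]
    ring
  | smul a x hx ihx =>
    rw [mul_smul_comm, map_smul, map_smul, ihx]
    simp only [smul_eq_C_mul, derivative_C_mul]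
    ring

lemma count_list (l : List ℝ) (a : ℝ) :
    l.count a = ((Finset.range l.length).filter (fun k => l.getD k 0 = a)).card := by
  induction l with
  | nil => simp
  | cons x t ih =>
    rw [Finset.card_filter, List.length_cons, Finset.sum_range_succ']
    simp only [List.getD_cons_succ, List.getD_cons_zero, ← Finset.card_filter]
    rw [List.count_cons, ← ih]
    by_cases hxa : x = a
    · subst hxa; simp
    · simp [hxa, beq_iff_eq]

noncomputable def Fw (α : ℝ) (g : Polynomial ℝ) (x : ℝ) : ℝ :=
  (-x) ^ (-α) * (1+x) ^ (1+α) * g.eval x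

lemma Fw_cont (α : ℝ) (hα : α ∈ Set.Icc (-1:ℝ) 0) (g : Polynomial ℝ) :
    Continuous (Fw α g) := by
  obtain ⟨h1, h2⟩ := hα
  have c1 : Continuous fun x : ℝ => (-x) ^ (-α) :=
    (Real.continuous_rpow_const (by linarith)).comp continuous_neg
  have c2 : Continuous fun x : ℝ => (1+x) ^ (1+α) :=
    (Real.continuous_rpow_const (by linarith)).comp (continuous_const.add continuous_id)
  exact (c1.mul c2).mul (Polynomial.continuous g)

lemma Fw_root (α : ℝ) (g : Polynomial ℝ) (y : ℝ) (h : g.eval y = 0) : Fw α g y = 0 := by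
  simp [Fw, h]

lemma Fw_neg_one (α : ℝ) (g : Polynomial ℝ) (h : α ≠ -1) : Fw α g (-1) = 0 := by
  have : (1 + (-1:ℝ)) = 0 := by ring
  rw [Fw, this, Real.zero_rpow (by intro hc; apply h; linarith [hc])]
  · ring
lemma Fw_zero (α : ℝ) (g : Polynomial ℝ) (h : α ≠ 0) : Fw α g 0 = 0 := by
  rw [Fw, neg_zero, Real.zero_rpow (by simpa using h)]
  ring

lemma Fw_hasDeriv (α : ℝ) (g : Polynomial ℝ) (x : ℝ) (hx : x ∈ Set.Ioo (-1:ℝ) 0) :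
    HasDerivAt (Fw α g)
      (-((-x) ^ (-α-1) * (1+x) ^ α) *
        (x*(x+1) * (derivative g).eval x + (x - α) * g.eval x)) x := by
  obtain ⟨hx1, hx2⟩ := hx
  have hnx : (0:ℝ) < -x := by linarith
  have h1x : (0:ℝ) < 1 + x := by linarith
  have hA : HasDerivAt (fun y : ℝ => (-y) ^ (-α)) ((-α * (-x) ^ (-α - 1)) * -1) x := by
    have := Real.hasDerivAt_rpow_const (x := -x) (p := -α) (Or.inl (ne_of_gt hnx))
    exact this.comp x (hasDerivAt_neg x)
  have hB : HasDerivAt (fun y : ℝ => (1+y) ^ (1+α)) (((1+α) * (1+x) ^ (1+α - 1)) * 1) x := by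
    have := Real.hasDerivAt_rpow_const (x := 1+x) (p := 1+α) (Or.inl (ne_of_gt h1x))
    exact this.comp x ((hasDerivAt_id x).const_add 1)
  have hG : HasDerivAt (fun y : ℝ => g.eval y) ((derivative g).eval x) x := g.hasDerivAt x
  have hF := (hA.mul hB).mul hG
  have hF' : HasDerivAt (Fw α g) _ x := hF
  convert hF' using 1
  simp only [Pi.mul_apply]
  have e1 : (-x) ^ (-α) = (-x) ^ (-α-1) * (-x) := by
    rw [← Real.rpow_add_one (ne_of_gt hnx) (-α-1)]; ring_nf
  have e2 : (1+x) ^ (1+α) = (1+x) ^ α * (1+x) := by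
    rw [← Real.rpow_add_one (ne_of_gt h1x) α]; ring_nf
  have e3 : (1+α-1 : ℝ) = α := by ring
  rw [e3, e1, e2]
  ring

lemma rolle_root (α : ℝ) (hα : α ∈ Set.Icc (-1:ℝ) 0) (g : Polynomial ℝ) (a b : ℝ)
    (hab : a < b) (ha : -1 ≤ a) (hb : b ≤ 0)
    (hFa : Fw α g a = 0) (hFb : Fw α g b = 0) :
    ∃ c, a < c ∧ c < b ∧
      (X * (X+1) * derivative g + (X - C α) * g).eval c = 0 := by
  obtain ⟨c, hc, hdc⟩ := exists_deriv_eq_zero hab ((Fw_cont α hα g).continuousOn)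
    (hFa.trans hFb.symm)
  obtain ⟨hc1, hc2⟩ := hc
  have hcI : c ∈ Set.Ioo (-1:ℝ) 0 := ⟨lt_of_le_of_lt ha hc1, lt_of_lt_of_le hc2 hb⟩
  have hd := Fw_hasDeriv α g c hcI
  rw [hd.deriv] at hdc
  have hw : (0:ℝ) < (-c) ^ (-α-1) * (1+c) ^ α :=
    mul_pos (Real.rpow_pos_of_pos (by linarith [hcI.2]) _)
      (Real.rpow_pos_of_pos (by linarith [hcI.1]) _)
  have hne : -((-c) ^ (-α-1) * (1+c) ^ α) ≠ 0 := neg_ne_zero.mpr hw.ne'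
  have : c*(c+1) * (derivative g).eval c + (c - α) * g.eval c = 0 :=
    (mul_eq_zero.mp hdc).resolve_left hne
  refine ⟨c, hc1, hc2, ?_⟩
  simp only [eval_add, eval_mul, eval_sub, eval_X, eval_C, eval_one]
  linarith [this]

lemma deriv_eval_zero_of_two_le (g : Polynomial ℝ) (c : ℝ)
    (h2 : 2 ≤ rootMultiplicity c g) : (derivative g).eval c = 0 := by
  obtain ⟨k, hk⟩ : (X - C c) ^ 2 ∣ g :=
    dvd_trans (pow_dvd_pow _ h2) (pow_rootMultiplicity_dvd g c)
  rw [hk, derivative_mul, derivative_pow]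
  simp



lemma pow_sub_one_dvd_derivative' (g : Polynomial ℝ) (c : ℝ) (m : ℕ)
    (hm : m ≤ rootMultiplicity c g) : (X - C c) ^ (m - 1) ∣ derivative g := by
  obtain ⟨k, hk⟩ : (X - C c) ^ m ∣ g :=
    dvd_trans (pow_dvd_pow _ hm) (pow_rootMultiplicity_dvd g c)
  rw [hk, derivative_mul, derivative_pow]
  refine dvd_add (Dvd.dvd.mul_right ?_ _) (Dvd.dvd.mul_right ?_ _)
  · exact Dvd.dvd.mul_right (dvd_mul_left _ _) _
  · exact pow_dvd_pow _ (Nat.sub_le m 1)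

lemma h_natDegree (α : ℝ) (g : Polynomial ℝ) (hg : g ≠ 0) :
    (X * (X+1) * derivative g + (X - C α) * g).natDegree = g.natDegree + 1 ∧
      (X * (X+1) * derivative g + (X - C α) * g) ≠ 0 := by
  set n := g.natDegree with hn
  set h := X * (X+1) * derivative g + (X - C α) * g with hh
  have hcoeff : h.coeff (n+1) = ((n:ℝ)+1) * g.leadingCoeff := by
    rcases Nat.eq_zero_or_pos n with h0 | hpos
    · obtain ⟨a, ha⟩ := Polynomial.natDegree_eq_zero.mp h0
      have hd0 : derivative g = 0 := by rw [← ha]; simp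
      have e1 : (X * C a).coeff 1 = a := by
        have := coeff_X_mul (C a) 0
        simpa using this
      have e2 : (C α * C a).coeff 1 = 0 := by rw [← C_mul]; simp [coeff_C]
      rw [hh, hd0, mul_zero, zero_add, ← ha, sub_mul, coeff_sub, h0]
      simp only [zero_add, Nat.cast_zero]
      rw [e1, e2, leadingCoeff_C]
      ring
    · have hsplit : h = X^2 * derivative g + X * derivative g + (X * g - C α * g) := by
        rw [hh]; ring
      rw [hsplit]
      simp only [coeff_add, coeff_sub]
      have e1 : (X^2 * derivative g).coeff (n+1) = (derivative g).coeff (n-1) := by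
        have hi : n + 1 = (n-1) + 2 := by omega
        rw [hi, coeff_X_pow_mul]
      have e2 : (derivative g).coeff (n-1) = g.coeff n * (n:ℝ) := by
        rw [coeff_derivative]
        have hi : n - 1 + 1 = n := by omega
        rw [hi]
        have hc : ((n-1:ℕ):ℝ) + 1 = (n:ℝ) := by
          calc ((n-1:ℕ):ℝ) + 1 = (((n-1)+1 : ℕ):ℝ) := by push_cast; ring
          _ = (n:ℝ) := by rw [hi]
        rw [hc]
      have e3 : (X * derivative g).coeff (n+1) = (derivative g).coeff n := coeff_X_mul _ _
      have e4 : (derivative g).coeff n = 0 := by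
        rw [coeff_derivative, coeff_eq_zero_of_natDegree_lt (by omega), zero_mul]
      have e5 : (X * g).coeff (n+1) = g.coeff n := coeff_X_mul _ _
      have e6 : (C α * g).coeff (n+1) = α * g.coeff (n+1) := coeff_C_mul _
      have e7 : g.coeff (n+1) = 0 := coeff_eq_zero_of_natDegree_lt (by omega)
      rw [e1, e2, e3, e4, e5, e6, e7, Polynomial.leadingCoeff, ← hn]
      ring
  have hlc : g.leadingCoeff ≠ 0 := leadingCoeff_ne_zero.mpr hg
  have hc0 : h.coeff (n+1) ≠ 0 := by
    rw [hcoeff]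
    exact mul_ne_zero (by positivity) hlc
  have hne : h ≠ 0 := fun h0 => hc0 (by rw [h0, coeff_zero])
  have hXX : (X * (X+1) : Polynomial ℝ).natDegree ≤ 2 := by
    compute_degree
  have hle : h.natDegree ≤ n + 1 := by
    rw [hh]
    refine le_trans (natDegree_add_le _ _) (max_le ?_ ?_)
    · rcases Nat.eq_zero_or_pos n with h0 | hpos
      · obtain ⟨a, ha⟩ := Polynomial.natDegree_eq_zero.mp h0
        have hd0 : derivative g = 0 := by rw [← ha]; simp
        rw [hd0, mul_zero]
        simp
      · refine le_trans (natDegree_mul_le) ?_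
        have := Polynomial.natDegree_derivative_le g
        omega
    · refine le_trans (natDegree_mul_le) ?_
      have : (X - C α : Polynomial ℝ).natDegree ≤ 1 := by compute_degree
      omega
  exact ⟨le_antisymm hle (le_natDegree_of_ne_zero hc0), hne⟩

lemma claim_interior (α : ℝ) (g : Polynomial ℝ) (hg : g ≠ 0) (a : ℝ) :
    rootMultiplicity a g - 1 ≤
      rootMultiplicity a (X * (X+1) * derivative g + (X - C α) * g) := by
  have hne := (h_natDegree α g hg).2
  rw [le_rootMultiplicity_iff hne]
  refine dvd_add (Dvd.dvd.mul_left (pow_sub_one_dvd_derivative' g a _ le_rfl) _)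
    (Dvd.dvd.mul_left (dvd_trans (pow_dvd_pow _ (Nat.sub_le _ _))
      (pow_rootMultiplicity_dvd g a)) _)

lemma claim_neg_one (α : ℝ) (g : Polynomial ℝ) (hg : g ≠ 0) :
    rootMultiplicity (-1) g ≤
      rootMultiplicity (-1) (X * (X+1) * derivative g + (X - C α) * g) := by
  have hne := (h_natDegree α g hg).2
  rw [le_rootMultiplicity_iff hne]
  have e : (X - C (-1:ℝ)) = X + 1 := by rw [map_neg, map_one, sub_neg_eq_add]
  rcases Nat.eq_zero_or_pos (rootMultiplicity (-1) g) with h0 | hpos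
  · rw [h0, pow_zero]; exact one_dvd _
  obtain ⟨s, hs⟩ := Nat.exists_eq_add_of_le hpos
  rw [hs]
  refine dvd_add ?_ (Dvd.dvd.mul_left (dvd_trans (dvd_of_eq (by rw [hs]))
    (pow_rootMultiplicity_dvd g (-1))) _)
  · obtain ⟨w, hw⟩ := pow_sub_one_dvd_derivative' g (-1) (1+s) (le_of_eq hs.symm)
    have hsimp : (1 + s) - 1 = s := by omega
    rw [hsimp] at hw
    refine ⟨X * w, ?_⟩
    rw [hw, e]
    ring
lemma claim_zero (α : ℝ) (g : Polynomial ℝ) (hg : g ≠ 0) :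
    rootMultiplicity 0 g ≤
      rootMultiplicity 0 (X * (X+1) * derivative g + (X - C α) * g) := by
  have hne := (h_natDegree α g hg).2
  rw [le_rootMultiplicity_iff hne]
  have e : (X - C (0:ℝ)) = X := by rw [map_zero, sub_zero]
  rcases Nat.eq_zero_or_pos (rootMultiplicity 0 g) with h0 | hpos
  · rw [h0, pow_zero]; exact one_dvd _
  obtain ⟨s, hs⟩ := Nat.exists_eq_add_of_le hpos
  rw [hs]
  refine dvd_add ?_ (Dvd.dvd.mul_left (dvd_trans (dvd_of_eq (by rw [hs]))
    (pow_rootMultiplicity_dvd g 0)) _)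
  · obtain ⟨w, hw⟩ := pow_sub_one_dvd_derivative' g 0 (1+s) (le_of_eq hs.symm)
    have hsimp : (1 + s) - 1 = s := by omega
    rw [hsimp] at hw
    refine ⟨(X+1) * w, ?_⟩
    rw [hw, e]
    ring


theorem core_s10 (α : ℝ) (hα : α ∈ Set.Icc (-1:ℝ) 0) (g h : Polynomial ℝ) (hg : g ≠ 0)
    (hreal : Multiset.card g.roots = g.natDegree)
    (hroots : ∀ x ∈ g.roots, x ∈ Set.Icc (-1:ℝ) 0)
    (hEq : h = X * (X+1) * derivative g + (X - C α) * g) :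
    Multiset.card h.roots = h.natDegree ∧
    (∀ x ∈ h.roots, x ∈ Set.Icc (-1:ℝ) 0) ∧
    h ≠ 0 ∧
    Multiset.card h.roots = Multiset.card g.roots + 1 ∧
    (∀ i < Multiset.card g.roots, nthRoot h i ≤ nthRoot g i ∧ nthRoot g i ≤ nthRoot h (i+1)) ∧
    (g.roots.Nodup → h.roots.Nodup) := by
  obtain ⟨hα1, hα2⟩ := hα
  set n := g.natDegree with hn
  have hdeg : h.natDegree = n + 1 := by rw [hEq]; exact (h_natDegree α g hg).1
  have hne : h ≠ 0 := by rw [hEq]; exact (h_natDegree α g hg).2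
  set bl := g.roots.sort (· ≤ ·) with hbl
  have hblen : bl.length = n := by rw [hbl, Multiset.length_sort, hreal]
  set bfun : ℕ → ℝ := fun k => bl.getD k 0 with hbfun
  have hsorted : bl.Pairwise (· ≤ ·) := Multiset.pairwise_sort _ _
  have hbget : ∀ k (hk : k < n), bfun k = bl.get ⟨k, by rw [hblen]; exact hk⟩ := by
    intro k hk
    exact List.getD_eq_getElem _ _ (by rw [hblen]; exact hk)
  have hbmem : ∀ k, k < n → bfun k ∈ g.roots := by
    intro k hk
    rw [hbget k hk]
    have := List.get_mem bl ⟨k, by rw [hblen]; exact hk⟩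
    exact (Multiset.mem_sort (r := (· ≤ ·))).mp this
  have hbroot : ∀ k, k < n → g.eval (bfun k) = 0 := fun k hk =>
    isRoot_of_mem_roots (hbmem k hk)
  have hbIcc : ∀ k, k < n → -1 ≤ bfun k ∧ bfun k ≤ 0 := fun k hk => hroots _ (hbmem k hk)
  have hbmono : ∀ j k, j ≤ k → k < n → bfun j ≤ bfun k := by
    intro j k hjk hk
    rw [hbget j (lt_of_le_of_lt hjk hk), hbget k hk]
    exact hsorted.rel_get_of_le (by simpa using hjk)
  have hbexists : ∀ a : ℝ, g.eval a = 0 → ∃ k, k < n ∧ bfun k = a := by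
    intro a ha
    have : a ∈ g.roots := by
      rw [mem_roots hg]; exact ha
    rw [← Multiset.mem_sort (r := (· ≤ ·)), ← hbl] at this
    obtain ⟨⟨k, hk⟩, hget⟩ := List.mem_iff_get.mp this
    have hk' : k < n := by rw [← hblen]; exact hk
    refine ⟨k, hk', ?_⟩
    rw [hbget k hk']
    exact hget
  have hbcount : ∀ a : ℝ, ((Finset.range n).filter (fun k => bfun k = a)).card
      = rootMultiplicity a g := by
    intro a
    rw [← count_roots, ← Multiset.sort_eq g.roots (· ≤ ·), ← hbl, Multiset.coe_count,
      count_list, hblen]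
  set L : ℕ → ℝ := fun i => if i = 0 then -1 else bfun (i-1) with hL
  set R : ℕ → ℝ := fun i => if i = n then 0 else bfun i with hR
  have hL0 : L 0 = -1 := by simp [hL]
  have hLs : ∀ i, i ≠ 0 → L i = bfun (i-1) := fun i hi => by simp [hL, hi]
  have hRn : R n = 0 := by simp [hR]
  have hRs : ∀ i, i ≠ n → R i = bfun i := fun i hi => by simp [hR, hi]
  have hL1 : ∀ i, i ≤ n → -1 ≤ L i := by
    intro i hi
    by_cases hi0 : i = 0
    · rw [hi0, hL0]
    · rw [hLs i hi0]; exact (hbIcc _ (by omega)).1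
  have hR0 : ∀ i, i ≤ n → R i ≤ 0 := by
    intro i hi
    by_cases hin : i = n
    · rw [hin, hRn]
    · rw [hRs i hin]; exact (hbIcc _ (by omega)).2
  have hLR : ∀ i, i ≤ n → L i ≤ R i := by
    intro i hi
    by_cases hi0 : i = 0
    · subst hi0
      by_cases hn0 : 0 = n
      · rw [hL0, show (0:ℕ) = n from hn0, hRn]; norm_num
      · rw [hL0, hRs 0 hn0]; exact (hbIcc 0 (by omega)).1
    · by_cases hin : i = n
      · rw [hin, hRn, hLs n (by omega)]
        exact (hbIcc _ (by omega)).2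
      · rw [hLs i hi0, hRs i hin]
        exact hbmono (i-1) i (by omega) (by omega)
  have hRL : ∀ i, i < n → R i = L (i+1) := by
    intro i hi
    rw [hRs i (by omega), hLs (i+1) (by omega)]
    simp
  have hev : ∀ c : ℝ, h.eval c = c*(c+1)*(derivative g).eval c + (c-α)*g.eval c := by
    intro c
    rw [hEq]
    simp only [eval_add, eval_mul, eval_sub, eval_X, eval_C, eval_one]
  -- slot existence
  have slots : ∀ i : ℕ, ∃ c : ℝ,
      i ≤ n →
      ((L i ≤ c ∧ c ≤ R i) ∧ h.eval c = 0 ∧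
       (L i = R i → c = L i) ∧
       (L i < R i →
         (L i < c ∧ c < R i) ∨ (i = 0 ∧ c = -1 ∧ α = -1 ∧ g.eval (-1) ≠ 0)
           ∨ (i = n ∧ c = 0 ∧ α = 0 ∧ g.eval 0 ≠ 0))) := by
      intro i
      by_cases hin : i ≤ n
      swap
      · exact ⟨0, fun hcon => absurd hcon hin⟩
      rcases eq_or_lt_of_le (hLR i hin) with heq | hlt
      · -- degenerate slot
        refine ⟨L i, fun _ => ⟨⟨le_refl _, heq.le⟩, ?_, fun _ => rfl,
          fun hc => absurd heq (ne_of_lt hc)⟩⟩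
        by_cases hi0 : i = 0
        · subst hi0
          have hR00 : R 0 = -1 := by rw [← heq, hL0]
          have hnne : (0:ℕ) ≠ n := by
            intro hc
            have : R 0 = 0 := by rw [hc]; exact hRn
            rw [hR00] at this; norm_num at this
          have hb0 : bfun 0 = -1 := by rw [← hRs 0 hnne, hR00]
          have groot : g.eval (-1) = 0 := by rw [← hb0]; exact hbroot 0 (by omega)
          rw [hev, hL0, groot]; ring
        · by_cases hinn : i = n
          · subst hinn
            have hLn0 : L n = 0 := by rw [heq, hRn]
            have hb : bfun (n-1) = 0 := by rw [← hLs n hi0, hLn0]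
            have groot : g.eval 0 = 0 := by
              have := hbroot (n-1) (by omega)
              rw [hb] at this
              exact this
            rw [hev, hLn0, groot]; ring
          · have hLi : L i = bfun (i-1) := hLs i hi0
            have hRi : R i = bfun i := hRs i hinn
            have heq2 : bfun (i-1) = bfun i := by rw [← hLi, ← hRi, heq]
            have hmul : 2 ≤ rootMultiplicity (L i) g := by
              rw [← hbcount (L i)]
              have hsub : ({i-1, i} : Finset ℕ) ⊆
                  (Finset.range n).filter (fun k => bfun k = L i) := by
                intro x hx
                rcases Finset.mem_insert.mp hx with h1 | h2
                · subst h1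
                  exact Finset.mem_filter.mpr ⟨Finset.mem_range.mpr (by omega), hLi.symm⟩
                · rw [Finset.mem_singleton] at h2
                  subst h2
                  exact Finset.mem_filter.mpr ⟨Finset.mem_range.mpr (by omega),
                    by rw [← heq2, ← hLi]⟩
              have hcard2 : ({i-1, i} : Finset ℕ).card = 2 := by
                rw [Finset.card_insert_of_notMem (by simp; omega), Finset.card_singleton]
              calc 2 = ({i-1, i} : Finset ℕ).card := hcard2.symm
              _ ≤ _ := Finset.card_le_card hsub
            have hgd : (derivative g).eval (L i) = 0 := deriv_eval_zero_of_two_le g _ hmul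
            have hgg : g.eval (L i) = 0 := by rw [hLi]; exact hbroot (i-1) (by omega)
            rw [hev, hgd, hgg]; ring
      · -- nondegenerate slot
        by_cases hsl : i = 0 ∧ α = -1 ∧ g.eval (-1) ≠ 0
        · obtain ⟨hi0, hαm1, hgne⟩ := hsl
          subst hi0
          refine ⟨-1, fun _ => ⟨⟨le_of_eq hL0, by rw [← hL0]; exact hlt.le⟩, ?_,
            fun hc => absurd hc (ne_of_lt hlt), fun _ => Or.inr (Or.inl ⟨rfl, rfl, hαm1, hgne⟩)⟩⟩
          rw [hev, hαm1]; ring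
        · by_cases hsr : i = n ∧ α = 0 ∧ g.eval 0 ≠ 0
          · obtain ⟨hin', hα0, hgne⟩ := hsr
            subst hin'
            refine ⟨0, fun _ => ⟨⟨by rw [← hRn]; exact hlt.le, le_of_eq hRn.symm⟩, ?_,
              fun hc => absurd hc (ne_of_lt hlt), fun _ => Or.inr (Or.inr ⟨rfl, rfl, hα0, hgne⟩)⟩⟩
            rw [hev, hα0]; ring
          · have hFL : Fw α g (L i) = 0 := by
              by_cases hi0 : i = 0
              · subst hi0
                rw [hL0]
                by_cases hgz : g.eval (-1) = 0
                · exact Fw_root α g (-1) hgz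
                · exact Fw_neg_one α g (fun hc => hsl ⟨rfl, hc, hgz⟩)
              · rw [hLs i hi0]
                exact Fw_root α g _ (hbroot (i-1) (by omega))
            have hFR : Fw α g (R i) = 0 := by
              by_cases hinn : i = n
              · subst hinn
                rw [hRn]
                by_cases hgz : g.eval 0 = 0
                · exact Fw_root α g 0 hgz
                · exact Fw_zero α g (fun hc => hsr ⟨rfl, hc, hgz⟩)
              · rw [hRs i hinn]
                exact Fw_root α g _ (hbroot i (by omega))
            obtain ⟨c, hc1, hc2, hc3⟩ := rolle_root α ⟨hα1, hα2⟩ g (L i) (R i) hlt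
              (hL1 i hin) (hR0 i hin) hFL hFR
            refine ⟨c, fun _ => ⟨⟨hc1.le, hc2.le⟩, ?_,
              fun hc => absurd hc (ne_of_lt hlt), fun _ => Or.inl ⟨hc1, hc2⟩⟩⟩
            rw [hEq]; exact hc3
  choose d hd using slots
  -- basic properties of d
  have dlb : ∀ i, i ≤ n → L i ≤ d i := fun i hi => ((hd i hi).1).1
  have dub : ∀ i, i ≤ n → d i ≤ R i := fun i hi => ((hd i hi).1).2
  have droot : ∀ i, i ≤ n → h.eval (d i) = 0 := fun i hi => (hd i hi).2.1
  have dstep : ∀ i, i + 1 ≤ n → d i ≤ d (i+1) := by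
    intro i hi
    calc d i ≤ R i := dub i (by omega)
    _ = L (i+1) := hRL i (by omega)
    _ ≤ d (i+1) := dlb (i+1) hi
  have dmono : ∀ j, j ≤ n → ∀ i, i ≤ j → d i ≤ d j := by
    intro j
    induction j with
    | zero =>
      intro _ i hi
      have hi0 : i = 0 := by omega
      rw [hi0]
    | succ m ih =>
      intro hm i hi
      rcases Nat.eq_or_lt_of_le hi with he | hlt
      · rw [he]
      · exact le_trans (ih (by omega) i (by omega)) (dstep m hm)
  have dIcc : ∀ i, i ≤ n → -1 ≤ d i ∧ d i ≤ 0 := fun i hi =>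
    ⟨le_trans (hL1 i hi) (dlb i hi), le_trans (dub i hi) (hR0 i hi)⟩
  -- the count bound
  have hScard : ∀ a : ℝ, ((Finset.range (n+1)).filter (fun i => d i = a)).card
      ≤ rootMultiplicity a h := by
    intro a
    set S := (Finset.range (n+1)).filter (fun i => d i = a) with hS
    rcases S.eq_empty_or_nonempty with hempty | ⟨i0, hi0⟩
    · simp [hempty]
    · have hi0' := Finset.mem_filter.mp hi0
      have hi0n : i0 ≤ n := by have := Finset.mem_range.mp hi0'.1; omega
      have haroot : h.eval a = 0 := by rw [← hi0'.2]; exact droot i0 hi0n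
      have hrm1 : 1 ≤ rootMultiplicity a h := (rootMultiplicity_pos hne).mpr haroot
      have hclass : ∀ i, i ∈ S → (L i = R i ∧ L i = a) ∨ (L i < a ∧ a < R i)
          ∨ (i = 0 ∧ a = -1 ∧ α = -1 ∧ g.eval (-1) ≠ 0)
          ∨ (i = n ∧ a = 0 ∧ α = 0 ∧ g.eval 0 ≠ 0) := by
        intro i hiS
        obtain ⟨hir, hia⟩ := Finset.mem_filter.mp hiS
        have hin : i ≤ n := by have := Finset.mem_range.mp hir; omega
        obtain ⟨_, _, hdegen, hstrict⟩ := hd i hin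
        rcases eq_or_lt_of_le (hLR i hin) with heq | hlt
        · exact Or.inl ⟨heq, by rw [← hia, hdegen heq]⟩
        · rcases hstrict hlt with h1 | h2 | h3
          · exact Or.inr (Or.inl ⟨by rw [← hia]; exact h1.1, by rw [← hia]; exact h1.2⟩)
          · exact Or.inr (Or.inr (Or.inl ⟨h2.1, by rw [← hia, h2.2.1], h2.2.2.1, h2.2.2.2⟩))
          · exact Or.inr (Or.inr (Or.inr ⟨h3.1, by rw [← hia, h3.2.1], h3.2.2.1, h3.2.2.2⟩))
      by_cases ham1 : a = -1
      · subst ham1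
        by_cases hg1 : g.eval (-1) = 0
        · have hmaps : ∀ i ∈ S, i ∈ (Finset.range n).filter (fun k => bfun k = -1) := by
            intro i hiS
            have hiS' := Finset.mem_filter.mp hiS
            have hin : i ≤ n := by have := Finset.mem_range.mp hiS'.1; omega
            rcases hclass i hiS with ⟨heq, hLa⟩ | ⟨hL', hR'⟩ | hsl | hsr
            · have hineqn : i ≠ n := by
                intro hc; subst hc; rw [heq, hRn] at hLa; norm_num at hLa
              refine Finset.mem_filter.mpr ⟨Finset.mem_range.mpr (by omega), ?_⟩
              rw [← hRs i hineqn, ← heq]; exact hLa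
            · exfalso; have := hL1 i hin; linarith
            · exact absurd hg1 hsl.2.2.2
            · exfalso; have := hsr.2.1; norm_num at this
          calc S.card ≤ ((Finset.range n).filter (fun k => bfun k = -1)).card :=
                Finset.card_le_card hmaps
          _ = rootMultiplicity (-1) g := hbcount (-1)
          _ ≤ rootMultiplicity (-1) h := by rw [hEq]; exact claim_neg_one α g hg
        · have hsub : S ⊆ {0} := by
            intro i hiS
            have hiS' := Finset.mem_filter.mp hiS
            have hin : i ≤ n := by have := Finset.mem_range.mp hiS'.1; omega
            rcases hclass i hiS with ⟨heq, hLa⟩ | ⟨hL', hR'⟩ | hsl | hsr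
            · exfalso
              have hineqn : i ≠ n := by
                intro hc; subst hc; rw [heq, hRn] at hLa; norm_num at hLa
              have hb : bfun i = -1 := by rw [← hRs i hineqn, ← heq]; exact hLa
              have := hbroot i (by omega)
              rw [hb] at this
              exact hg1 this
            · exfalso; have := hL1 i hin; linarith
            · simp [hsl.1]
            · exfalso; have := hsr.2.1; norm_num at this
          calc S.card ≤ ({0} : Finset ℕ).card := Finset.card_le_card hsub
          _ = 1 := Finset.card_singleton 0
          _ ≤ _ := hrm1
      · by_cases ha0 : a = 0
        · subst ha0
          by_cases hg0 : g.eval 0 = 0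
          · have hmem1 : ∀ i ∈ S, 1 ≤ i ∧
                (i - 1) ∈ (Finset.range n).filter (fun k => bfun k = 0) := by
              intro i hiS
              have hiS' := Finset.mem_filter.mp hiS
              have hin : i ≤ n := by have := Finset.mem_range.mp hiS'.1; omega
              rcases hclass i hiS with ⟨heq, hLa⟩ | ⟨hL', hR'⟩ | hsl | hsr
              · have hi0 : i ≠ 0 := by
                  intro hc; subst hc; rw [hL0] at hLa; norm_num at hLa
                refine ⟨by omega, Finset.mem_filter.mpr ⟨Finset.mem_range.mpr (by omega), ?_⟩⟩
                rw [← hLs i hi0]; exact hLa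
              · exfalso; have := hR0 i hin; linarith
              · exfalso; have := hsl.2.1; norm_num at this
              · exact absurd hg0 hsr.2.2.2
            refine le_trans (Finset.card_le_card_of_injOn (fun i => i - 1)
              (fun i hi => (hmem1 i hi).2) ?_) ?_
            · intro i hiS j hjS hij
              have h1 := (hmem1 i hiS).1
              have h2 := (hmem1 j hjS).1
              simp only at hij
              omega
            · rw [hbcount 0, hEq]
              exact claim_zero α g hg
          · have hsub : S ⊆ {n} := by
              intro i hiS
              have hiS' := Finset.mem_filter.mp hiS
              have hin : i ≤ n := by have := Finset.mem_range.mp hiS'.1; omega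
              rcases hclass i hiS with ⟨heq, hLa⟩ | ⟨hL', hR'⟩ | hsl | hsr
              · exfalso
                have hi0 : i ≠ 0 := by
                  intro hc; subst hc; rw [hL0] at hLa; norm_num at hLa
                have hb : bfun (i-1) = 0 := by rw [← hLs i hi0]; exact hLa
                have := hbroot (i-1) (by omega)
                rw [hb] at this
                exact hg0 this
              · exfalso; have := hR0 i hin; linarith
              · exfalso; have := hsl.2.1; norm_num at this
              · simp [hsr.1]
            calc S.card ≤ ({n} : Finset ℕ).card := Finset.card_le_card hsub
            _ = 1 := Finset.card_singleton n
            _ ≤ _ := hrm1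
        · by_cases hga : g.eval a = 0
          · obtain ⟨k0w, hk0w, hk0wa⟩ := hbexists a hga
            have hBane : ((Finset.range n).filter (fun k => bfun k = a)).Nonempty :=
              ⟨k0w, Finset.mem_filter.mpr ⟨Finset.mem_range.mpr hk0w, hk0wa⟩⟩
            set Ba := (Finset.range n).filter (fun k => bfun k = a) with hBa
            set k0 := Ba.min' hBane with hk0
            have hSmem : ∀ i ∈ S, i ∈ Ba.erase k0 := by
              intro i hiS
              have hiS' := Finset.mem_filter.mp hiS
              have hin : i ≤ n := by have := Finset.mem_range.mp hiS'.1; omega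
              rcases hclass i hiS with ⟨heq, hLa⟩ | ⟨hL', hR'⟩ | hsl | hsr
              · have hi0 : i ≠ 0 := by
                  intro hc; subst hc; rw [hL0] at hLa; exact ham1 hLa.symm
                have hinn : i ≠ n := by
                  intro hc; subst hc; rw [heq, hRn] at hLa; exact ha0 hLa.symm
                have hb1 : bfun (i-1) = a := by rw [← hLs i hi0]; exact hLa
                have hb2 : bfun i = a := by rw [← hRs i hinn, ← heq]; exact hLa
                refine Finset.mem_erase.mpr ⟨?_,
                  Finset.mem_filter.mpr ⟨Finset.mem_range.mpr (by omega), hb2⟩⟩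
                have hk0le : k0 ≤ i - 1 := Finset.min'_le _ _
                  (Finset.mem_filter.mpr ⟨Finset.mem_range.mpr (by omega), hb1⟩)
                omega
              · exfalso
                by_cases hi0 : i = 0
                · subst hi0
                  have h0n : (0:ℕ) ≠ n := by omega
                  have : R 0 ≤ a := by
                    rw [hRs 0 h0n, ← hk0wa]
                    exact hbmono 0 k0w (by omega) hk0w
                  linarith
                · by_cases hinn : i = n
                  · subst hinn
                    have : a ≤ L n := by
                      rw [hLs n hi0, ← hk0wa]
                      exact hbmono k0w (n-1) (by omega) (by omega)
                    linarith
                  · rcases le_or_gt i k0w with hik | hik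
                    · have : R i ≤ a := by
                        rw [hRs i hinn, ← hk0wa]
                        exact hbmono i k0w hik hk0w
                      linarith
                    · have : a ≤ L i := by
                        rw [hLs i hi0, ← hk0wa]
                        exact hbmono k0w (i-1) (by omega) (by omega)
                      linarith
              · exact absurd hsl.2.1 ham1
              · exact absurd hsr.2.1 ha0
            calc S.card ≤ (Ba.erase k0).card := Finset.card_le_card hSmem
            _ = Ba.card - 1 := Finset.card_erase_of_mem (Finset.min'_mem _ _)
            _ = rootMultiplicity a g - 1 := by rw [hBa, hbcount a]
            _ ≤ rootMultiplicity a h := by rw [hEq]; exact claim_interior α g hg a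
          · have hsub : ∀ i ∈ S, ∀ j ∈ S, i = j := by
              intro i hiS j hjS
              have key : ∀ m, m ∈ S → L m < a ∧ a < R m := by
                intro m hmS
                have hmS' := Finset.mem_filter.mp hmS
                have hmn : m ≤ n := by have := Finset.mem_range.mp hmS'.1; omega
                rcases hclass m hmS with ⟨heq, hLa⟩ | hok | hsl | hsr
                · exfalso
                  have hm0 : m ≠ 0 := by
                    intro hc; subst hc; rw [hL0] at hLa; exact ham1 hLa.symm
                  have hmnn : m ≠ n := by
                    intro hc; subst hc; rw [heq, hRn] at hLa; exact ha0 hLa.symm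
                  have hb2 : bfun m = a := by rw [← hRs m hmnn, ← heq]; exact hLa
                  have := hbroot m (by omega)
                  rw [hb2] at this
                  exact hga this
                · exact hok
                · exact absurd hsl.2.1 ham1
                · exact absurd hsr.2.1 ha0
              have hiS' := Finset.mem_filter.mp hiS
              have hjS' := Finset.mem_filter.mp hjS
              have hin : i ≤ n := by have := Finset.mem_range.mp hiS'.1; omega
              have hjn : j ≤ n := by have := Finset.mem_range.mp hjS'.1; omega
              by_contra hij
              have horder : ∀ x y, x < y → y ≤ n → x ∈ S → y ∈ S → False := by
                intro x y hxy hyn hxS hyS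
                have h1 := (key x hxS).2
                have h2 := (key y hyS).1
                have hxn : x ≠ n := by omega
                have hy0 : y ≠ 0 := by omega
                have : R x ≤ L y := by
                  rw [hRs x hxn, hLs y hy0]
                  exact hbmono x (y-1) (by omega) (by omega)
                linarith
              rcases lt_trichotomy i j with hlt' | heq' | hgt'
              · exact horder i j hlt' hjn hiS hjS
              · exact hij heq'
              · exact horder j i hgt' hin hjS hiS
            calc S.card ≤ 1 := Finset.card_le_one.mpr hsub
            _ ≤ _ := hrm1
  -- assemble the multiset
  set dl : List ℝ := List.ofFn (fun i : Fin (n+1) => d i.val) with hdl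
  have hdllen : dl.length = n + 1 := by rw [hdl]; exact List.length_ofFn
  have hdlget : ∀ i, i < n + 1 → dl.getD i 0 = d i := by
    intro i hi
    simp only [hdl]
    rw [List.getD_eq_getElem _ _ (by simpa using hi), List.getElem_ofFn]
  have hdlcount : ∀ a : ℝ, dl.count a
      = ((Finset.range (n+1)).filter (fun i => d i = a)).card := by
    intro a
    rw [count_list, hdllen]
    congr 1
    apply Finset.filter_congr
    intro i hi
    rw [hdlget i (Finset.mem_range.mp hi)]
  have hMle : (dl : Multiset ℝ) ≤ h.roots := by
    rw [Multiset.le_iff_count]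
    intro a
    rw [Multiset.coe_count, hdlcount, count_roots]
    exact hScard a
  have hcards : Multiset.card (dl : Multiset ℝ) = n + 1 := by
    rw [Multiset.coe_card, hdllen]
  have hrootsEq : h.roots = (dl : Multiset ℝ) := by
    refine (Multiset.eq_of_le_of_card_le hMle ?_).symm
    rw [hcards, ← hdeg]
    exact card_roots' h
  have hhcard : Multiset.card h.roots = n + 1 := by rw [hrootsEq, hcards]
  have hsorted_dl : dl.Pairwise (· ≤ ·) := by
    rw [hdl, ← List.sortedLE_iff_pairwise, List.sortedLE_ofFn_iff]
    intro i j hij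
    exact dmono j.val (by omega) i.val (by exact_mod_cast hij)
  have hsort_eq : h.roots.sort (· ≤ ·) = dl := by
    refine List.Perm.eq_of_pairwise' (Multiset.pairwise_sort _ _) hsorted_dl ?_
    rw [← Multiset.coe_eq_coe, Multiset.sort_eq, hrootsEq]
  have hnth : ∀ i, i ≤ n → nthRoot h i = d i := by
    intro i hi
    show (h.roots.sort (· ≤ ·)).getD i 0 = d i
    rw [hsort_eq]
    exact hdlget i (by omega)
  have hnthg : ∀ i, i < n → nthRoot g i = bfun i := by
    intro i hi
    rfl
  refine ⟨by rw [hhcard, hdeg], ?_, hne, by rw [hhcard, hreal], ?_, ?_⟩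
  · -- roots in Icc
    intro x hx
    rw [hrootsEq] at hx
    rw [Multiset.mem_coe, hdl, List.mem_ofFn] at hx
    obtain ⟨i, hi⟩ := hx
    have h2 := dIcc i.val (by omega)
    have hx' : d i.val = x := hi
    rw [hx'] at h2
    exact ⟨h2.1, h2.2⟩
  · -- interlacing
    intro i hi
    rw [hreal] at hi
    constructor
    · rw [hnth i (by omega), hnthg i hi, ← hRs i (by omega)]
      exact dub i (by omega)
    · rw [hnth (i+1) (by omega), hnthg i hi]
      calc bfun i = R i := (hRs i (by omega)).symm
      _ = L (i+1) := hRL i hi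
      _ ≤ d (i+1) := dlb (i+1) (by omega)
  · -- nodup
    intro hnd
    have hblnd : bl.Nodup := by
      have hcoe : (↑bl : Multiset ℝ) = g.roots := Multiset.sort_eq _ _
      rw [← hcoe] at hnd
      exact Multiset.coe_nodup.mp hnd
    have hbne : ∀ j k, j < k → k < n → bfun j ≠ bfun k := by
      intro j k hjk hk heq
      have hj' : j < bl.length := by rw [hblen]; omega
      have hk' : k < bl.length := by rw [hblen]; exact hk
      have hinj := List.nodup_iff_injective_get.mp hblnd
      have heq2 : (⟨j, hj'⟩ : Fin bl.length) = ⟨k, hk'⟩ := hinj (by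
        rw [← hbget j (by omega), ← hbget k hk]; exact heq)
      simp only [Fin.mk.injEq] at heq2
      omega
    have dstrict : ∀ i, i + 1 ≤ n → d i < d (i+1) := by
      intro i hi1
      rcases eq_or_lt_of_le (dstep i hi1) with heqd | hgood
      swap
      · exact hgood
      exfalso
      have hRLi := hRL i (by omega)
      have hdiR : d i = R i := by
        refine le_antisymm (dub i (by omega)) ?_
        rw [hRLi]
        calc L (i+1) ≤ d (i+1) := dlb _ hi1
        _ = d i := heqd.symm
      have hdL : d (i+1) = L (i+1) := by
        refine le_antisymm ?_ (dlb _ hi1)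
        rw [← hRLi]
        calc d (i+1) = d i := heqd.symm
        _ ≤ R i := dub i (by omega)
      have hin_i : i ≤ n := by omega
      obtain ⟨_, _, hdegen_i, hstrict_i⟩ := hd i hin_i
      have hdeg_i : L i = R i := by
        rcases eq_or_lt_of_le (hLR i hin_i) with he | hl
        · exact he
        · exfalso
          rcases hstrict_i hl with h1 | h2 | h3
          · exact absurd hdiR (ne_of_lt h1.2)
          · obtain ⟨hi0, hdm1, _, _⟩ := h2
            subst hi0
            rw [hL0] at hl
            rw [hdm1] at hdiR
            linarith
          · exact absurd h3.1 (by omega)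
      obtain ⟨_, _, hdegen_1, hstrict_1⟩ := hd (i+1) hi1
      have hdeg_1 : L (i+1) = R (i+1) := by
        rcases eq_or_lt_of_le (hLR (i+1) hi1) with he | hl
        · exact he
        · exfalso
          rcases hstrict_1 hl with h1 | h2 | h3
          · exact absurd hdL (ne_of_gt h1.1)
          · exact absurd h2.1 (by omega)
          · obtain ⟨hi1n, hd0, _, _⟩ := h3
            have hLi1 : L (i+1) = 0 := by rw [← hdL, hd0]
            have hRi0 : R i = 0 := by rw [hRLi, hLi1]
            by_cases hi0 : i = 0
            · subst hi0
              rw [hL0, hRi0] at hdeg_i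
              norm_num at hdeg_i
            · have hb1 : bfun (i-1) = 0 := by rw [← hLs i hi0, hdeg_i, hRi0]
              have hb2 : bfun i = 0 := by rw [← hRs i (by omega), hRi0]
              exact hbne (i-1) i (by omega) (by omega) (hb1.trans hb2.symm)
      by_cases hi0 : i = 0
      · subst hi0
        have hL1v : L 1 = -1 := by rw [← hRL 0 (by omega), ← hdeg_i, hL0]
        by_cases h1n : (1:ℕ) = n
        · have hR1 : R 1 = 0 := by rw [h1n]; exact hRn
          rw [hL1v, hR1] at hdeg_1
          norm_num at hdeg_1
        · have hb0 : bfun 0 = -1 := by rw [← hLs 1 (by omega)]; exact hL1v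
          have hb1 : bfun 1 = -1 := by rw [← hRs 1 h1n, ← hdeg_1]; exact hL1v
          exact hbne 0 1 (by omega) (by omega) (hb0.trans hb1.symm)
      · have hb1 : bfun (i-1) = bfun i := by
          rw [← hLs i hi0, ← hRs i (by omega)]
          exact hdeg_i
        exact hbne (i-1) i (by omega) (by omega) hb1
    have dsmono : ∀ j, j ≤ n → ∀ i, i < j → d i < d j := by
      intro j
      induction j with
      | zero => intro _ i hi; exact absurd hi (Nat.not_lt_zero i)
      | succ m ih =>
        intro hm i hi
        rcases Nat.lt_or_ge i m with hlt2 | hge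
        · exact lt_of_lt_of_le (ih (by omega) i hlt2) (dstep m hm)
        · have hieq : i = m := by omega
          rw [hieq]
          exact dstrict m hm
    rw [hrootsEq, Multiset.coe_nodup, hdl, List.nodup_ofFn]
    intro x y hxy
    simp only at hxy
    by_contra hne2
    have hxyne : x.val ≠ y.val := fun hc => hne2 (Fin.ext hc)
    rcases Nat.lt_or_ge x.val y.val with hlt2 | hge
    · have := dsmono y.val (by omega) x.val hlt2
      rw [hxy] at this
      exact lt_irrefl _ this
    · have hlt3 : y.val < x.val := by omega
      have := dsmono x.val (by omega) y.val hlt3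
      rw [hxy] at this
      exact lt_irrefl _ this

/-- Lemma: let `α ∈ [-1,0]` and suppose `𝓔(f)` is nonzero with all zeros in `[-1,0]`.
Then `𝓔((x-α)f)` has all zeros in `[-1,0]` and `𝓔(f)` interlaces `𝓔((x-α)f)`.
If moreover `𝓔(f)` has only simple zeros, then so does `𝓔((x-α)f)`. -/
theorem stmt10 (E : Polynomial ℝ →ₗ[ℝ] Polynomial ℝ)
    (hE : ∀ i : ℕ, E (binomPoly i) = X ^ i)
    (α : ℝ) (hα : α ∈ Set.Icc (-1 : ℝ) 0) (f : Polynomial ℝ)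
    (hne : E f ≠ 0) (hreal : AllRootsReal (E f))
    (hroots : ∀ x ∈ (E f).roots, x ∈ Set.Icc (-1 : ℝ) 0) :
    AllRootsReal (E ((X - C α) * f)) ∧
    (∀ x ∈ (E ((X - C α) * f)).roots, x ∈ Set.Icc (-1 : ℝ) 0) ∧
    Interlaces (E f) (E ((X - C α) * f)) ∧
    ((E f).roots.Nodup → (E ((X - C α) * f)).roots.Nodup) := by
  have hid := E_identity E hE α f
  obtain ⟨c1, c2, c3, c4, c5, c6⟩ :=
    core_s10 α hα (E f) (E ((X - C α) * f)) hne hreal hroots hid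
  exact ⟨c1, c2, ⟨⟨hne, hreal⟩, ⟨c3, c1⟩, c4, c5⟩, c6⟩
end
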